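/- arXiv:2003.13307 — 3 statements merged into one kernel-verified Lean document; each statement's English description precedes it below -/
import Mathlib

section
/- Let C be a finite tensor category. The canonical natural isomorphism κ_{2,3}: A₂ ⇒ A₃, determined by κ_{2,3}∘ι₂(V)_X = ι₃(V)_{∨X}∘(id_{∨X⊗V}⊗ω_X^{-1})∘(associativity), where ω_X: ∨(X∨)→X is the canonical isomorphism, is an isomorphism of Hopf monads. If C is pivotal, then all the canonical natural isomorphisms κ_{i,j}: A_i ⇒ A_j (defined on components by coherence isomorphisms together with ∨(X∨)≅X and the pivotal identification ∨X≅X∨) are isomorphisms of Hopf monads. -/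
open CategoryTheory MonoidalCategory

set_option maxHeartbeats 1000000

noncomputable section CatBase

/-- the left dual (in the paper's conventions this is the *right* dual `X∨`). -/
abbrev ld {C : Type} [Category C] [MonoidalCategory C] [RigidCategory C] (X : C) : C :=
  HasLeftDual.leftDual X
/-- the right dual (in the paper's conventions this is the *left* dual `∨X`). -/
abbrev rd {C : Type} [Category C] [MonoidalCategory C] [RigidCategory C] (X : C) : C :=
  HasRightDual.rightDual X

variable {C : Type} [Category C] [MonoidalCategory C] [RigidCategory C]

/-- the canonical isomorphism `∨V ⊗ ∨W ⟶ ∨(W ⊗ V)` (for the paper's left duals). -/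
def γmap (V W : C) : rd V ⊗ rd W ⟶ rd (W ⊗ V) :=
  (ρ_ (rd V ⊗ rd W)).inv ≫ ((rd V ⊗ rd W) ◁ η_ (W ⊗ V) (rd (W ⊗ V))) ⊗≫
    (rd V ◁ (ε_ W (rd W) ▷ (V ⊗ rd (W ⊗ V)))) ⊗≫ (ε_ V (rd V) ▷ rd (W ⊗ V)) ⊗≫
    𝟙 (rd (W ⊗ V))

/-- the canonical isomorphism `V∨ ⊗ W∨ ⟶ (W ⊗ V)∨` (for the paper's right duals). -/
def γmapL (V W : C) : ld V ⊗ ld W ⟶ ld (W ⊗ V) :=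
  (λ_ (ld V ⊗ ld W)).inv ≫ (η_ (ld (W ⊗ V)) (W ⊗ V) ▷ (ld V ⊗ ld W)) ⊗≫
    (ld (W ⊗ V) ◁ (W ◁ (ε_ (ld V) V ▷ ld W))) ⊗≫ (ld (W ⊗ V) ◁ ε_ (ld W) W) ⊗≫
    𝟙 (ld (W ⊗ V))

variable (C)

/-- the canonical isomorphism `𝟙 ⟶ ∨𝟙`. -/
def uDual : 𝟙_ C ⟶ rd (𝟙_ C) :=
  η_ (𝟙_ C) (rd (𝟙_ C)) ≫ (λ_ (rd (𝟙_ C))).hom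

/-- the canonical isomorphism `𝟙 ⟶ 𝟙∨`. -/
def uDualL : 𝟙_ C ⟶ ld (𝟙_ C) :=
  η_ (ld (𝟙_ C)) (𝟙_ C) ≫ (ρ_ (ld (𝟙_ C))).hom

variable {C}

/-- the canonical isomorphism `X ⟶ (∨X)∨`, inverse of `ω`. -/
def ωinv (X : C) : X ⟶ ld (rd X) :=
  (λ_ X).inv ≫ (η_ (ld (rd X)) (rd X) ▷ X) ⊗≫ (ld (rd X) ◁ ε_ X (rd X)) ⊗≫ 𝟙 (ld (rd X))

/-- a monad structure on an endofunctor. -/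
structure MonadData (C : Type) [Category C] [MonoidalCategory C] where
  A : C ⥤ C
  μ : ∀ V : C, A.obj (A.obj V) ⟶ A.obj V
  η : ∀ V : C, V ⟶ A.obj V
  μ_nat : ∀ {V W : C} (f : V ⟶ W), A.map (A.map f) ≫ μ W = μ V ≫ A.map f
  η_nat : ∀ {V W : C} (f : V ⟶ W), f ≫ η W = η V ≫ A.map f
  μ_assoc : ∀ V : C, A.map (μ V) ≫ μ V = μ (A.obj V) ≫ μ V
  μ_unit_l : ∀ V : C, η (A.obj V) ≫ μ V = 𝟙 _
  μ_unit_r : ∀ V : C, A.map (η V) ≫ μ V = 𝟙 _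

/-- the bimonad axioms for a comonoidal structure `(M2, M0)` on a monad. -/
structure IsBimonad (M : MonadData C)
    (M2 : ∀ X Y : C, M.A.obj (X ⊗ Y) ⟶ M.A.obj X ⊗ M.A.obj Y)
    (M0 : M.A.obj (𝟙_ C) ⟶ 𝟙_ C) : Prop where
  M2_nat : ∀ {X X' Y Y' : C} (f : X ⟶ X') (g : Y ⟶ Y'),
    M.A.map (f ⊗ₘ g) ≫ M2 X' Y' = M2 X Y ≫ (M.A.map f ⊗ₘ M.A.map g)
  M2_assoc : ∀ X Y Z : C,
    M2 (X ⊗ Y) Z ≫ (M2 X Y ▷ M.A.obj Z) ≫ (α_ _ _ _).hom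
      = M.A.map (α_ X Y Z).hom ≫ M2 X (Y ⊗ Z) ≫ (M.A.obj X ◁ M2 Y Z)
  M2_unit_l : ∀ X : C,
    M2 (𝟙_ C) X ≫ (M0 ▷ M.A.obj X) ≫ (λ_ (M.A.obj X)).hom = M.A.map (λ_ X).hom
  M2_unit_r : ∀ X : C,
    M2 X (𝟙_ C) ≫ (M.A.obj X ◁ M0) ≫ (ρ_ (M.A.obj X)).hom = M.A.map (ρ_ X).hom
  μ_comonoidal : ∀ X Y : C,
    M.μ (X ⊗ Y) ≫ M2 X Y
      = M.A.map (M2 X Y) ≫ M2 (M.A.obj X) (M.A.obj Y) ≫ (M.μ X ⊗ₘ M.μ Y)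
  μ_counit : M.μ (𝟙_ C) ≫ M0 = M.A.map M0 ≫ M0
  η_comonoidal : ∀ X Y : C, M.η (X ⊗ Y) ≫ M2 X Y = M.η X ⊗ₘ M.η Y
  η_counit : M.η (𝟙_ C) ≫ M0 = 𝟙 (𝟙_ C)

/-- the Bruguières–Virelizier axioms for a left antipode (the paper's left duals being
`rd`). -/
def IsLeftAntipode (M : MonadData C)
    (M2 : ∀ X Y : C, M.A.obj (X ⊗ Y) ⟶ M.A.obj X ⊗ M.A.obj Y)
    (M0 : M.A.obj (𝟙_ C) ⟶ 𝟙_ C)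
    (sl : ∀ V : C, M.A.obj (rd (M.A.obj V)) ⟶ rd V) : Prop :=
  (∀ V : C,
    M2 (rd (M.A.obj V)) V
        ≫ ((M.A.map (rightAdjointMate (M.μ V)) ≫ sl (M.A.obj V)) ▷ M.A.obj V)
        ≫ ε_ (M.A.obj V) (rd (M.A.obj V))
      = M.A.map (rightAdjointMate (M.η V) ▷ V) ≫ M.A.map (ε_ V (rd V)) ≫ M0)
  ∧ (∀ V : C,
    M.A.map (η_ (M.A.obj V) (rd (M.A.obj V))) ≫ M2 (M.A.obj V) (rd (M.A.obj V))
        ≫ (M.μ V ⊗ₘ sl V)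
      = M0 ≫ η_ V (rd V) ≫ (M.η V ▷ rd V))

/-- the Bruguières–Virelizier axioms for a right antipode (the paper's right duals
being `ld`). -/
def IsRightAntipode (M : MonadData C)
    (M2 : ∀ X Y : C, M.A.obj (X ⊗ Y) ⟶ M.A.obj X ⊗ M.A.obj Y)
    (M0 : M.A.obj (𝟙_ C) ⟶ 𝟙_ C)
    (sr : ∀ V : C, M.A.obj (ld (M.A.obj V)) ⟶ ld V) : Prop :=
  (∀ V : C,
    M2 V (ld (M.A.obj V))
        ≫ (M.A.obj V ◁ (M.A.map (leftAdjointMate (M.μ V)) ≫ sr (M.A.obj V)))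
        ≫ ε_ (ld (M.A.obj V)) (M.A.obj V)
      = M.A.map (V ◁ leftAdjointMate (M.η V)) ≫ M.A.map (ε_ (ld V) V) ≫ M0)
  ∧ (∀ V : C,
    M.A.map (η_ (ld (M.A.obj V)) (M.A.obj V)) ≫ M2 (ld (M.A.obj V)) (M.A.obj V)
        ≫ (sr V ⊗ₘ M.μ V)
      = M0 ≫ η_ (ld V) V ≫ (ld V ◁ M.η V))

/-- `(M, M2, M0)` is a Hopf monad: a bimonad admitting both antipodes. -/
def IsHopfMonad (M : MonadData C)
    (M2 : ∀ X Y : C, M.A.obj (X ⊗ Y) ⟶ M.A.obj X ⊗ M.A.obj Y)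
    (M0 : M.A.obj (𝟙_ C) ⟶ 𝟙_ C) : Prop :=
  IsBimonad M M2 M0
  ∧ (∃ sl : ∀ V : C, M.A.obj (rd (M.A.obj V)) ⟶ rd V, IsLeftAntipode M M2 M0 sl)
  ∧ (∃ sr : ∀ V : C, M.A.obj (ld (M.A.obj V)) ⟶ ld V, IsRightAntipode M M2 M0 sr)

/-- the central monad `A₂(V) = ∫^X ∨X ⊗ (V ⊗ X)` together with its canonical monad
and comonoidal structure, all determined by the universal property of the coend. -/
structure CentralMonadA2 (C : Type) [Category C] [MonoidalCategory C] [RigidCategory C] where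
  M : MonadData C
  ι : ∀ V X : C, rd X ⊗ (V ⊗ X) ⟶ M.A.obj V
  dinat : ∀ (V : C) {X Y : C} (f : X ⟶ Y),
    (rightAdjointMate f ▷ (V ⊗ X)) ≫ ι V X = (rd Y ◁ (V ◁ f)) ≫ ι V Y
  nat : ∀ {V W : C} (g : V ⟶ W) (X : C),
    (rd X ◁ (g ▷ X)) ≫ ι W X = ι V X ≫ M.A.map g
  universal : ∀ (V W : C) (g : ∀ X : C, rd X ⊗ (V ⊗ X) ⟶ W),
    (∀ {X Y : C} (f : X ⟶ Y), (rightAdjointMate f ▷ (V ⊗ X)) ≫ g X = (rd Y ◁ (V ◁ f)) ≫ g Y) →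
    ∃! h : M.A.obj V ⟶ W, ∀ X : C, ι V X ≫ h = g X
  η_det : ∀ V : C, M.η V = (λ_ V).inv ≫ (uDual C ⊗ₘ (ρ_ V).inv) ≫ ι V (𝟙_ C)
  μ_det : ∀ V X Y : C,
    (rd Y ◁ (ι V X ▷ Y)) ≫ ι (M.A.obj V) Y ≫ M.μ V
      = 𝟙 (rd Y ⊗ ((rd X ⊗ (V ⊗ X)) ⊗ Y)) ⊗≫
          (γmap Y X ▷ (V ⊗ (X ⊗ Y))) ≫ ι V (X ⊗ Y)
  M2 : ∀ X Y : C, M.A.obj (X ⊗ Y) ⟶ M.A.obj X ⊗ M.A.obj Y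
  M0 : M.A.obj (𝟙_ C) ⟶ 𝟙_ C
  M2_det : ∀ U V X : C,
    ι (U ⊗ V) X ≫ M2 U V
      = 𝟙 (rd X ⊗ ((U ⊗ V) ⊗ X)) ⊗≫
          ((rd X ⊗ U) ◁ (η_ X (rd X) ▷ (V ⊗ X))) ⊗≫ (ι U X ⊗ₘ ι V X)
  M0_det : ∀ X : C, ι (𝟙_ C) X ≫ M0 = (rd X ◁ (λ_ X).hom) ≫ ε_ X (rd X)

/-- the central monad `A₃(V) = ∫^X (X ⊗ V) ⊗ X∨` with its canonical structure. -/
structure CentralMonadA3 (C : Type) [Category C] [MonoidalCategory C] [RigidCategory C] where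
  M : MonadData C
  ι : ∀ V X : C, (X ⊗ V) ⊗ ld X ⟶ M.A.obj V
  dinat : ∀ (V : C) {X Y : C} (f : X ⟶ Y),
    ((f ▷ V) ▷ ld Y) ≫ ι V Y = ((X ⊗ V) ◁ leftAdjointMate f) ≫ ι V X
  nat : ∀ {V W : C} (g : V ⟶ W) (X : C),
    ((X ◁ g) ▷ ld X) ≫ ι W X = ι V X ≫ M.A.map g
  universal : ∀ (V W : C) (g : ∀ X : C, (X ⊗ V) ⊗ ld X ⟶ W),
    (∀ {X Y : C} (f : X ⟶ Y), ((f ▷ V) ▷ ld Y) ≫ g Y = ((X ⊗ V) ◁ leftAdjointMate f) ≫ g X) →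
    ∃! h : M.A.obj V ⟶ W, ∀ X : C, ι V X ≫ h = g X
  η_det : ∀ V : C, M.η V
    = (λ_ V).inv ≫ (ρ_ (𝟙_ C ⊗ V)).inv ≫ ((𝟙_ C ⊗ V) ◁ uDualL C) ≫ ι V (𝟙_ C)
  μ_det : ∀ V X Y : C,
    ((Y ◁ ι V X) ▷ ld Y) ≫ ι (M.A.obj V) Y ≫ M.μ V
      = 𝟙 ((Y ⊗ ((X ⊗ V) ⊗ ld X)) ⊗ ld Y) ⊗≫
          (((Y ⊗ X) ⊗ V) ◁ γmapL X Y) ≫ ι V (Y ⊗ X)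
  M2 : ∀ X Y : C, M.A.obj (X ⊗ Y) ⟶ M.A.obj X ⊗ M.A.obj Y
  M0 : M.A.obj (𝟙_ C) ⟶ 𝟙_ C
  M2_det : ∀ U V X : C,
    ι (U ⊗ V) X ≫ M2 U V
      = 𝟙 ((X ⊗ (U ⊗ V)) ⊗ ld X) ⊗≫
          ((X ⊗ U) ◁ (η_ (ld X) X ▷ (V ⊗ ld X))) ⊗≫ (ι U X ⊗ₘ ι V X)
  M0_det : ∀ X : C, ι (𝟙_ C) X ≫ M0 = ((ρ_ X).hom ▷ ld X) ≫ ε_ (ld X) X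

/-- a pivotal structure, encoded as a monoidal natural isomorphism between the right
and the left dual functors. -/
structure PivotalData (C : Type) [Category C] [MonoidalCategory C] [RigidCategory C] where
  p : ∀ X : C, ld X ≅ rd X
  nat : ∀ {X Y : C} (f : X ⟶ Y), leftAdjointMate f ≫ (p X).hom = (p Y).hom ≫ rightAdjointMate f
  monoidal : ∀ X Y : C,
    ((p X).hom ⊗ₘ (p Y).hom) ≫ γmap X Y = γmapL X Y ≫ (p (Y ⊗ X)).hom
  unit : uDualL C ≫ (p (𝟙_ C)).hom = uDual C

/-- the central monad `A₁(V) = ∫^X X∨ ⊗ (V ⊗ X)` with its canonical structure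
(`C` pivotal). -/
structure CentralMonadA1 (C : Type) [Category C] [MonoidalCategory C] [RigidCategory C]
    (P : PivotalData C) where
  M : MonadData C
  ι : ∀ V X : C, ld X ⊗ (V ⊗ X) ⟶ M.A.obj V
  dinat : ∀ (V : C) {X Y : C} (f : X ⟶ Y),
    (leftAdjointMate f ▷ (V ⊗ X)) ≫ ι V X = (ld Y ◁ (V ◁ f)) ≫ ι V Y
  nat : ∀ {V W : C} (g : V ⟶ W) (X : C),
    (ld X ◁ (g ▷ X)) ≫ ι W X = ι V X ≫ M.A.map g
  universal : ∀ (V W : C) (g : ∀ X : C, ld X ⊗ (V ⊗ X) ⟶ W),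
    (∀ {X Y : C} (f : X ⟶ Y), (leftAdjointMate f ▷ (V ⊗ X)) ≫ g X = (ld Y ◁ (V ◁ f)) ≫ g Y) →
    ∃! h : M.A.obj V ⟶ W, ∀ X : C, ι V X ≫ h = g X
  η_det : ∀ V : C, M.η V = (λ_ V).inv ≫ (uDualL C ⊗ₘ (ρ_ V).inv) ≫ ι V (𝟙_ C)
  μ_det : ∀ V X Y : C,
    (ld Y ◁ (ι V X ▷ Y)) ≫ ι (M.A.obj V) Y ≫ M.μ V
      = 𝟙 (ld Y ⊗ ((ld X ⊗ (V ⊗ X)) ⊗ Y)) ⊗≫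
          (γmapL Y X ▷ (V ⊗ (X ⊗ Y))) ≫ ι V (X ⊗ Y)
  M2 : ∀ X Y : C, M.A.obj (X ⊗ Y) ⟶ M.A.obj X ⊗ M.A.obj Y
  M0 : M.A.obj (𝟙_ C) ⟶ 𝟙_ C
  M2_det : ∀ U V X : C,
    ι (U ⊗ V) X ≫ M2 U V
      = 𝟙 (ld X ⊗ ((U ⊗ V) ⊗ X)) ⊗≫
          ((ld X ⊗ U) ◁ ((η_ X (rd X) ≫ (X ◁ (P.p X).inv)) ▷ (V ⊗ X))) ⊗≫
          (ι U X ⊗ₘ ι V X)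
  M0_det : ∀ X : C,
    ι (𝟙_ C) X ≫ M0 = (ld X ◁ (λ_ X).hom) ≫ ((P.p X).hom ▷ X) ≫ ε_ X (rd X)

/-- the central monad `A₄(V) = ∫^X (X ⊗ V) ⊗ ∨X` with its canonical structure
(`C` pivotal). -/
structure CentralMonadA4 (C : Type) [Category C] [MonoidalCategory C] [RigidCategory C]
    (P : PivotalData C) where
  M : MonadData C
  ι : ∀ V X : C, (X ⊗ V) ⊗ rd X ⟶ M.A.obj V
  dinat : ∀ (V : C) {X Y : C} (f : X ⟶ Y),
    ((f ▷ V) ▷ rd Y) ≫ ι V Y = ((X ⊗ V) ◁ rightAdjointMate f) ≫ ι V X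
  nat : ∀ {V W : C} (g : V ⟶ W) (X : C),
    ((X ◁ g) ▷ rd X) ≫ ι W X = ι V X ≫ M.A.map g
  universal : ∀ (V W : C) (g : ∀ X : C, (X ⊗ V) ⊗ rd X ⟶ W),
    (∀ {X Y : C} (f : X ⟶ Y), ((f ▷ V) ▷ rd Y) ≫ g Y = ((X ⊗ V) ◁ rightAdjointMate f) ≫ g X) →
    ∃! h : M.A.obj V ⟶ W, ∀ X : C, ι V X ≫ h = g X
  η_det : ∀ V : C, M.η V
    = (λ_ V).inv ≫ (ρ_ (𝟙_ C ⊗ V)).inv ≫ ((𝟙_ C ⊗ V) ◁ uDual C) ≫ ι V (𝟙_ C)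
  μ_det : ∀ V X Y : C,
    ((Y ◁ ι V X) ▷ rd Y) ≫ ι (M.A.obj V) Y ≫ M.μ V
      = 𝟙 ((Y ⊗ ((X ⊗ V) ⊗ rd X)) ⊗ rd Y) ⊗≫
          (((Y ⊗ X) ⊗ V) ◁ γmap X Y) ≫ ι V (Y ⊗ X)
  M2 : ∀ X Y : C, M.A.obj (X ⊗ Y) ⟶ M.A.obj X ⊗ M.A.obj Y
  M0 : M.A.obj (𝟙_ C) ⟶ 𝟙_ C
  M2_det : ∀ U V X : C,
    ι (U ⊗ V) X ≫ M2 U V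
      = 𝟙 ((X ⊗ (U ⊗ V)) ⊗ rd X) ⊗≫
          ((X ⊗ U) ◁ ((η_ (ld X) X ≫ ((P.p X).hom ▷ X)) ▷ (V ⊗ rd X))) ⊗≫
          (ι U X ⊗ₘ ι V X)
  M0_det : ∀ X : C,
    ι (𝟙_ C) X ≫ M0 = ((ρ_ X).hom ▷ rd X) ≫ (X ◁ (P.p X).inv) ≫ ε_ (ld X) X

end CatBase

/-!
STATEMENT 1.
Let `C` be a finite tensor category.  The canonical natural isomorphism
`κ_{2,3} : A₂ ⇒ A₃`, determined by
`κ_{2,3} ∘ ι₂(V)_X = ι₃(V)_{∨X} ∘ (id_{∨X⊗V} ⊗ ω_X⁻¹) ∘ (associativity)`,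
is an isomorphism of Hopf monads.  If `C` is pivotal, then all the canonical natural
isomorphisms `κ_{i,j} : A_i ⇒ A_j` (defined on components by coherence isomorphisms
together with `∨(X∨) ≅ X` and the pivotal identification `∨X ≅ X∨`) are isomorphisms
of Hopf monads; here we state this for the generating isomorphisms `κ_{1,2}`,
`κ_{2,3}` and `κ_{3,4}`.
-/

open CategoryTheory MonoidalCategory

variable {C : Type} [Category C] [MonoidalCategory C] [RigidCategory C]

/-- `κ` is an isomorphism of Hopf monads from `(M, M2, M0)` to `(M', M2', M0')`:
a comonoidal natural isomorphism which is a morphism of monads. -/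
def IsHopfMonadIso (M M' : MonadData C)
    (M2 : ∀ X Y : C, M.A.obj (X ⊗ Y) ⟶ M.A.obj X ⊗ M.A.obj Y)
    (M0 : M.A.obj (𝟙_ C) ⟶ 𝟙_ C)
    (M2' : ∀ X Y : C, M'.A.obj (X ⊗ Y) ⟶ M'.A.obj X ⊗ M'.A.obj Y)
    (M0' : M'.A.obj (𝟙_ C) ⟶ 𝟙_ C)
    (κ : ∀ V : C, M.A.obj V ⟶ M'.A.obj V) : Prop :=
  -- each component is an isomorphism
  (∀ V : C, IsIso (κ V))
  -- naturality
  ∧ (∀ {V W : C} (f : V ⟶ W), M.A.map f ≫ κ W = κ V ≫ M'.A.map f)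
  -- morphism of monads
  ∧ (∀ V : C, M.μ V ≫ κ V = M.A.map (κ V) ≫ κ (M'.A.obj V) ≫ M'.μ V)
  ∧ (∀ V : C, M.η V ≫ κ V = M'.η V)
  -- comonoidal
  ∧ (∀ X Y : C, κ (X ⊗ Y) ≫ M2' X Y = M2 X Y ≫ (κ X ⊗ₘ κ Y))
  ∧ (κ (𝟙_ C) ≫ M0' = M0)

section Helpers
open CategoryTheory MonoidalCategory
variable {C : Type} [Category C] [MonoidalCategory C] [RigidCategory C]

/-- a family of morphisms into `A` is jointly epic. -/
def JEpi {A : C} {S : C → C} (f : ∀ X : C, S X ⟶ A) : Prop :=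
  ∀ {W : C} (h₁ h₂ : A ⟶ W), (∀ X, f X ≫ h₁ = f X ≫ h₂) → h₁ = h₂

theorem JEpi.whiskerLeft {A : C} {S : C → C} {f : ∀ X : C, S X ⟶ A} (hf : JEpi f) (U : C) :
    JEpi (fun X => U ◁ f X) := by
  intro W h₁ h₂ h
  refine ((tensorLeftAdjunction (ᘁU) U).homEquiv A W).injective (hf _ _ fun X => ?_)
  rw [← Adjunction.homEquiv_naturality_left, ← Adjunction.homEquiv_naturality_left]
  exact congrArg _ (h X)

theorem JEpi.whiskerRight {A : C} {S : C → C} {f : ∀ X : C, S X ⟶ A} (hf : JEpi f) (U : C) :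
    JEpi (fun X => f X ▷ U) := by
  intro W h₁ h₂ h
  refine ((tensorRightAdjunction U (Uᘁ)).homEquiv A W).injective (hf _ _ fun X => ?_)
  rw [← Adjunction.homEquiv_naturality_left, ← Adjunction.homEquiv_naturality_left]
  exact congrArg _ (h X)

end Helpers
section Helpers2
open CategoryTheory MonoidalCategory
variable {C : Type} [Category C] [MonoidalCategory C] [RigidCategory C]

/-- the canonical morphism `X ⟶ rd (ld X)`. -/
def ψm (X : C) : X ⟶ rd (ld X) :=
  (ρ_ X).inv ≫ (X ◁ η_ (ld X) (rd (ld X))) ≫ (α_ _ _ _).inv ≫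
    (ε_ (ld X) X ▷ rd (ld X)) ≫ (λ_ _).hom

theorem omega_def' (X : C) :
    ωinv X = (λ_ X).inv ≫ (η_ (ld (rd X)) (rd X) ▷ X) ≫ (α_ _ _ _).hom ≫
      (ld (rd X) ◁ ε_ X (rd X)) ≫ (ρ_ _).hom := by
  dsimp [ωinv]; monoidal

theorem ev_cancel {Z W : C} {u v : W ⟶ ld Z}
    (h : (Z ◁ u) ≫ ε_ (ld Z) Z = (Z ◁ v) ≫ ε_ (ld Z) Z) : u = v := by
  have := congrArg (tensorLeftHomEquiv W (ld Z) Z (𝟙_ C)) h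
  rw [tensorLeftHomEquiv_whiskerLeft_comp_evaluation,
    tensorLeftHomEquiv_whiskerLeft_comp_evaluation] at this
  simpa using this

theorem ev_cancel' {Z W : C} {u v : W ⟶ rd Z}
    (h : (u ▷ Z) ≫ ε_ Z (rd Z) = (v ▷ Z) ≫ ε_ Z (rd Z)) : u = v := by
  have := congrArg (tensorRightHomEquiv W Z (rd Z) (𝟙_ C)) h
  rw [tensorRightHomEquiv_whiskerRight_comp_evaluation,
    tensorRightHomEquiv_whiskerRight_comp_evaluation] at this
  simpa using this

theorem coev_cancel {V W : C} (X : C) {u v : W ⟶ V ⊗ rd X}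
    (h : u ▷ X ≫ (α_ _ _ _).hom ≫ (V ◁ ε_ X (rd X)) = v ▷ X ≫ (α_ _ _ _).hom ≫ (V ◁ ε_ X (rd X))) :
    u = v := by
  have := (tensorRightHomEquiv W X (rd X) V).symm.injective (a₁ := u) (a₂ := v)
  simp only [tensorRightHomEquiv, Equiv.coe_fn_symm_mk] at this
  apply this
  rw [reassoc_of% h]

end Helpers2
section Helpers3
open CategoryTheory MonoidalCategory
variable {C : Type} [Category C] [MonoidalCategory C] [RigidCategory C]

theorem omega_ev (X : C) :
    (rd X ◁ ωinv X) ≫ ε_ (ld (rd X)) (rd X) = ε_ X (rd X) := by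
  calc (rd X ◁ ωinv X) ≫ ε_ (ld (rd X)) (rd X)
      = 𝟙 _ ⊗≫ rd X ◁ η_ (ld (rd X)) (rd X) ▷ X ⊗≫
          ((rd X ⊗ ld (rd X)) ◁ ε_ X (rd X) ≫ ε_ (ld (rd X)) (rd X) ▷ 𝟙_ C) ⊗≫ 𝟙 _ := by
        rw [omega_def']; monoidal
    _ = 𝟙 _ ⊗≫ (rd X ◁ η_ (ld (rd X)) (rd X) ⊗≫ ε_ (ld (rd X)) (rd X) ▷ rd X) ▷ X ⊗≫
          ε_ X (rd X) := by
        rw [whisker_exchange]; monoidal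
    _ = ε_ X (rd X) := by
        rw [ExactPairing.coevaluation_evaluation'']; monoidal

theorem psi_ev (X : C) :
    (ψm X ▷ ld X) ≫ ε_ (ld X) (rd (ld X)) = ε_ (ld X) X := by
  calc (ψm X ▷ ld X) ≫ ε_ (ld X) (rd (ld X))
      = 𝟙 _ ⊗≫ X ◁ η_ (ld X) (rd (ld X)) ▷ ld X ⊗≫
          (ε_ (ld X) X ▷ (rd (ld X) ⊗ ld X) ≫ 𝟙_ C ◁ ε_ (ld X) (rd (ld X))) ⊗≫ 𝟙 _ := by
        dsimp [ψm]; monoidal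
    _ = 𝟙 _ ⊗≫ X ◁ (η_ (ld X) (rd (ld X)) ▷ ld X ⊗≫ ld X ◁ ε_ (ld X) (rd (ld X))) ⊗≫
          ε_ (ld X) X := by
        rw [← whisker_exchange]; monoidal
    _ = ε_ (ld X) X := by
        rw [ExactPairing.evaluation_coevaluation'']; monoidal

theorem coev_omega (X : C) :
    η_ X (rd X) ≫ (ωinv X ▷ rd X) = η_ (ld (rd X)) (rd X) := by
  apply coev_cancel X
  calc (η_ X (rd X) ≫ ωinv X ▷ rd X) ▷ X ≫ (α_ _ _ _).hom ≫ (ld (rd X) ◁ ε_ X (rd X))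
      = 𝟙 _ ⊗≫ η_ X (rd X) ▷ X ⊗≫
          (ωinv X ▷ (rd X ⊗ X) ≫ ld (rd X) ◁ ε_ X (rd X)) ⊗≫ 𝟙 _ := by
        monoidal
    _ = 𝟙 _ ⊗≫ (η_ X (rd X) ▷ X ⊗≫ X ◁ ε_ X (rd X)) ⊗≫ ωinv X ▷ 𝟙_ C ⊗≫ 𝟙 _ := by
        rw [← whisker_exchange]; monoidal
    _ = 𝟙 _ ⊗≫ ωinv X ▷ 𝟙_ C ⊗≫ 𝟙 _ := by
        rw [ExactPairing.evaluation_coevaluation'']; monoidal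
    _ = η_ (ld (rd X)) (rd X) ▷ X ≫ (α_ _ _ _).hom ≫ (ld (rd X) ◁ ε_ X (rd X)) := by
        rw [omega_def']; monoidal

theorem coev_psi (X : C) :
    η_ (ld X) X ≫ (ld X ◁ ψm X) = η_ (ld X) (rd (ld X)) := by
  apply coev_cancel (ld X)
  calc (η_ (ld X) X ≫ ld X ◁ ψm X) ▷ ld X ≫ (α_ _ _ _).hom ≫ (ld X ◁ ε_ (ld X) (rd (ld X)))
      = 𝟙 _ ⊗≫ η_ (ld X) X ▷ ld X ⊗≫
          ld X ◁ ((ψm X ▷ ld X) ≫ ε_ (ld X) (rd (ld X))) ⊗≫ 𝟙 _ := by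
        monoidal
    _ = 𝟙 _ ⊗≫ (η_ (ld X) X ▷ ld X ⊗≫ ld X ◁ ε_ (ld X) X) ⊗≫ 𝟙 _ := by
        rw [psi_ev]; monoidal
    _ = η_ (ld X) (rd (ld X)) ▷ ld X ≫ (α_ _ _ _).hom ≫ (ld X ◁ ε_ (ld X) (rd (ld X))) := by
        rw [ExactPairing.evaluation_coevaluation'']
        calc 𝟙 _ ⊗≫ (⊗𝟙 : _ ≅ _).hom ⊗≫ 𝟙 _
            = 𝟙 _ ⊗≫ (η_ (ld X) (rd (ld X)) ▷ ld X ⊗≫ ld X ◁ ε_ (ld X) (rd (ld X))) ⊗≫ 𝟙 _ := by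
              rw [ExactPairing.evaluation_coevaluation'']
          _ = _ := by monoidal

end Helpers3
section Helpers4
open CategoryTheory MonoidalCategory
variable {C : Type} [Category C] [MonoidalCategory C] [RigidCategory C]

/-- right adjoint mate with the generic rigid instances. -/
abbrev ram {X Y : C} (f : X ⟶ Y) : rd Y ⟶ rd X := rightAdjointMate f
/-- left adjoint mate with the generic rigid instances. -/
abbrev lam {X Y : C} (f : X ⟶ Y) : ld Y ⟶ ld X := leftAdjointMate f

theorem ram_ev {X Y : C} (f : X ⟶ Y) :
    (ram f ▷ X) ≫ ε_ X (rd X) = (rd Y ◁ f) ≫ ε_ Y (rd Y) :=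
  rightAdjointMate_comp_evaluation f

theorem lam_ev {X Y : C} (f : X ⟶ Y) :
    (X ◁ lam f) ≫ ε_ (ld X) X = (f ▷ ld Y) ≫ ε_ (ld Y) Y :=
  leftAdjointMate_comp_evaluation f

theorem omega_nat {X Y : C} (f : X ⟶ Y) :
    f ≫ ωinv Y = ωinv X ≫ lam (ram f) := by
  apply ev_cancel (Z := rd Y)
  calc (rd Y ◁ (f ≫ ωinv Y)) ≫ ε_ (ld (rd Y)) (rd Y)
      = (rd Y ◁ f) ≫ (rd Y ◁ ωinv Y) ≫ ε_ (ld (rd Y)) (rd Y) := by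
        simp [MonoidalCategory.whiskerLeft_comp]
    _ = (rd Y ◁ f) ≫ ε_ Y (rd Y) := by rw [omega_ev]
    _ = (ram f ▷ X) ≫ ε_ X (rd X) := (ram_ev f).symm
    _ = (ram f ▷ X) ≫ (rd X ◁ ωinv X) ≫ ε_ (ld (rd X)) (rd X) := by rw [omega_ev]
    _ = (rd Y ◁ ωinv X) ≫ (ram f ▷ ld (rd X)) ≫ ε_ (ld (rd X)) (rd X) := by
        rw [← whisker_exchange_assoc]
    _ = (rd Y ◁ ωinv X) ≫ (rd Y ◁ lam (ram f)) ≫ ε_ (ld (rd Y)) (rd Y) := by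
        rw [lam_ev (ram f)]
    _ = (rd Y ◁ (ωinv X ≫ lam (ram f))) ≫ ε_ (ld (rd Y)) (rd Y) := by
        simp [MonoidalCategory.whiskerLeft_comp]

theorem psi_nat {X Y : C} (f : X ⟶ Y) :
    f ≫ ψm Y = ψm X ≫ ram (lam f) := by
  apply ev_cancel' (Z := ld Y)
  calc ((f ≫ ψm Y) ▷ ld Y) ≫ ε_ (ld Y) (rd (ld Y))
      = (f ▷ ld Y) ≫ (ψm Y ▷ ld Y) ≫ ε_ (ld Y) (rd (ld Y)) := by
        simp [MonoidalCategory.comp_whiskerRight]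
    _ = (f ▷ ld Y) ≫ ε_ (ld Y) Y := by rw [psi_ev]
    _ = (X ◁ lam f) ≫ ε_ (ld X) X := (lam_ev f).symm
    _ = (X ◁ lam f) ≫ (ψm X ▷ ld X) ≫ ε_ (ld X) (rd (ld X)) := by rw [psi_ev]
    _ = (ψm X ▷ ld Y) ≫ (rd (ld X) ◁ lam f) ≫ ε_ (ld X) (rd (ld X)) := by
        rw [whisker_exchange_assoc]
    _ = (ψm X ▷ ld Y) ≫ (ram (lam f) ▷ ld Y) ≫ ε_ (ld Y) (rd (ld Y)) := by
        rw [ram_ev (lam f)]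
    _ = ((ψm X ≫ ram (lam f)) ▷ ld Y) ≫ ε_ (ld Y) (rd (ld Y)) := by
        simp [MonoidalCategory.comp_whiskerRight]

theorem psi_omega (X : C) : ψm (rd X) ≫ ram (ωinv X) = 𝟙 (rd X) := by
  apply ev_cancel' (Z := X)
  calc ((ψm (rd X) ≫ ram (ωinv X)) ▷ X) ≫ ε_ X (rd X)
      = (ψm (rd X) ▷ X) ≫ (ram (ωinv X) ▷ X) ≫ ε_ X (rd X) := by
        simp [MonoidalCategory.comp_whiskerRight]
    _ = (ψm (rd X) ▷ X) ≫ (rd (ld (rd X)) ◁ ωinv X) ≫ ε_ (ld (rd X)) (rd (ld (rd X))) := by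
        rw [ram_ev (ωinv X)]
    _ = (rd X ◁ ωinv X) ≫ (ψm (rd X) ▷ ld (rd X)) ≫ ε_ (ld (rd X)) (rd (ld (rd X))) := by
        rw [whisker_exchange_assoc]
    _ = (rd X ◁ ωinv X) ≫ ε_ (ld (rd X)) (rd X) := by rw [psi_ev]
    _ = ε_ X (rd X) := omega_ev X
    _ = (𝟙 (rd X) ▷ X) ≫ ε_ X (rd X) := by simp

theorem omega_psi (X : C) : ωinv (ld X) ≫ lam (ψm X) = 𝟙 (ld X) := by
  apply ev_cancel (Z := X)
  calc (X ◁ (ωinv (ld X) ≫ lam (ψm X))) ≫ ε_ (ld X) X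
      = (X ◁ ωinv (ld X)) ≫ (X ◁ lam (ψm X)) ≫ ε_ (ld X) X := by
        simp [MonoidalCategory.whiskerLeft_comp]
    _ = (X ◁ ωinv (ld X)) ≫ (ψm X ▷ ld (rd (ld X))) ≫ ε_ (ld (rd (ld X))) (rd (ld X)) := by
        rw [lam_ev (ψm X)]
    _ = (ψm X ▷ ld X) ≫ (rd (ld X) ◁ ωinv (ld X)) ≫ ε_ (ld (rd (ld X))) (rd (ld X)) := by
        rw [← whisker_exchange_assoc]
    _ = (ψm X ▷ ld X) ≫ ε_ (ld X) (rd (ld X)) := by rw [omega_ev]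
    _ = ε_ (ld X) X := psi_ev X
    _ = (X ◁ 𝟙 (ld X)) ≫ ε_ (ld X) X := by simp

theorem uDual_ev : (uDual C ▷ 𝟙_ C) ≫ ε_ (𝟙_ C) (rd (𝟙_ C)) = (λ_ (𝟙_ C)).hom := by
  calc (uDual C ▷ 𝟙_ C) ≫ ε_ (𝟙_ C) (rd (𝟙_ C))
      = η_ (𝟙_ C) (rd (𝟙_ C)) ▷ 𝟙_ C ≫ (α_ _ _ _).hom ≫
          (𝟙_ C ◁ ε_ (𝟙_ C) (rd (𝟙_ C))) ≫ (λ_ (𝟙_ C)).hom := by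
        dsimp [uDual]; monoidal
    _ = (λ_ (𝟙_ C)).hom := by
        rw [ExactPairing.evaluation_coevaluation_assoc]; monoidal

theorem uDualL_ev : (𝟙_ C ◁ uDualL C) ≫ ε_ (ld (𝟙_ C)) (𝟙_ C) = (λ_ (𝟙_ C)).hom := by
  calc (𝟙_ C ◁ uDualL C) ≫ ε_ (ld (𝟙_ C)) (𝟙_ C)
      = 𝟙_ C ◁ η_ (ld (𝟙_ C)) (𝟙_ C) ≫ (α_ _ _ _).inv ≫
          (ε_ (ld (𝟙_ C)) (𝟙_ C) ▷ 𝟙_ C) ≫ (ρ_ (𝟙_ C)).hom := by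
        dsimp [uDualL]; monoidal
    _ = (λ_ (𝟙_ C)).hom := by
        rw [ExactPairing.coevaluation_evaluation_assoc]; monoidal

theorem omega_unit : ωinv (𝟙_ C) ≫ lam (uDual C) = uDualL C := by
  apply ev_cancel (Z := 𝟙_ C)
  calc (𝟙_ C ◁ (ωinv (𝟙_ C) ≫ lam (uDual C))) ≫ ε_ (ld (𝟙_ C)) (𝟙_ C)
      = (𝟙_ C ◁ ωinv (𝟙_ C)) ≫ (𝟙_ C ◁ lam (uDual C)) ≫ ε_ (ld (𝟙_ C)) (𝟙_ C) := by
        simp [MonoidalCategory.whiskerLeft_comp]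
    _ = (𝟙_ C ◁ ωinv (𝟙_ C)) ≫ (uDual C ▷ ld (rd (𝟙_ C))) ≫
          ε_ (ld (rd (𝟙_ C))) (rd (𝟙_ C)) := by
        rw [lam_ev (uDual C)]
    _ = (uDual C ▷ 𝟙_ C) ≫ (rd (𝟙_ C) ◁ ωinv (𝟙_ C)) ≫ ε_ (ld (rd (𝟙_ C))) (rd (𝟙_ C)) := by
        rw [← whisker_exchange_assoc]
    _ = (uDual C ▷ 𝟙_ C) ≫ ε_ (𝟙_ C) (rd (𝟙_ C)) := by rw [omega_ev]
    _ = (𝟙_ C ◁ uDualL C) ≫ ε_ (ld (𝟙_ C)) (𝟙_ C) := by rw [uDual_ev, uDualL_ev]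

end Helpers4
section Helpers5
open CategoryTheory MonoidalCategory
variable {C : Type} [Category C] [MonoidalCategory C] [RigidCategory C]

/-- nested evaluation for a tensor product (right duals). -/
def εγ (X Y : C) : (rd Y ⊗ rd X) ⊗ (X ⊗ Y) ⟶ 𝟙_ C :=
  𝟙 _ ⊗≫ (rd Y ◁ (ε_ X (rd X) ▷ Y)) ⊗≫ ε_ Y (rd Y)

/-- nested evaluation for a tensor product (left duals). -/
def εγL (X Y : C) : (Y ⊗ X) ⊗ (ld X ⊗ ld Y) ⟶ 𝟙_ C :=
  𝟙 _ ⊗≫ (Y ◁ (ε_ (ld X) X ▷ ld Y)) ⊗≫ ε_ (ld Y) Y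

theorem gamma_ev (X Y : C) :
    (γmap Y X ▷ (X ⊗ Y)) ≫ ε_ (X ⊗ Y) (rd (X ⊗ Y)) = εγ X Y := by
  calc (γmap Y X ▷ (X ⊗ Y)) ≫ ε_ (X ⊗ Y) (rd (X ⊗ Y))
      = 𝟙 _ ⊗≫ (((rd Y ⊗ rd X : C)) ◁ (η_ (X ⊗ Y) (rd (X ⊗ Y)) ▷ (X ⊗ Y))) ⊗≫
          ((εγ X Y ▷ (rd (X ⊗ Y) ⊗ (X ⊗ Y))) ≫ (𝟙_ C ◁ ε_ (X ⊗ Y) (rd (X ⊗ Y)))) ⊗≫ 𝟙 _ := by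
        dsimp [γmap, εγ]; monoidal
    _ = 𝟙 _ ⊗≫ (((rd Y ⊗ rd X : C)) ◁ (η_ (X ⊗ Y) (rd (X ⊗ Y)) ▷ (X ⊗ Y) ≫ (α_ _ _ _).hom ≫
          ((X ⊗ Y) ◁ ε_ (X ⊗ Y) (rd (X ⊗ Y))))) ⊗≫ (εγ X Y ▷ 𝟙_ C) ⊗≫ 𝟙 _ := by
        rw [← whisker_exchange]; monoidal
    _ = εγ X Y := by
        rw [ExactPairing.evaluation_coevaluation]; monoidal

theorem gammaL_ev (X Y : C) :
    ((Y ⊗ X) ◁ γmapL X Y) ≫ ε_ (ld (Y ⊗ X)) (Y ⊗ X) = εγL X Y := by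
  calc ((Y ⊗ X) ◁ γmapL X Y) ≫ ε_ (ld (Y ⊗ X)) (Y ⊗ X)
      = 𝟙 _ ⊗≫ (((Y ⊗ X : C)) ◁ (η_ (ld (Y ⊗ X)) (Y ⊗ X) ▷ (ld X ⊗ ld Y))) ⊗≫
          (((((Y ⊗ X) ⊗ ld (Y ⊗ X) : C)) ◁ εγL X Y) ≫ (ε_ (ld (Y ⊗ X)) (Y ⊗ X) ▷ 𝟙_ C)) ⊗≫ 𝟙 _ := by
        dsimp [γmapL, εγL]; monoidal
    _ = 𝟙 _ ⊗≫ ((tensorObj Y X ◁ η_ (ld (tensorObj Y X)) (tensorObj Y X) ≫ (α_ _ _ _).inv ≫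
          (ε_ (ld (tensorObj Y X)) (tensorObj Y X) ▷ tensorObj Y X)) ▷ tensorObj (ld X) (ld Y)) ⊗≫ (𝟙_ C ◁ εγL X Y) ⊗≫ 𝟙 _ := by
        rw [whisker_exchange]; monoidal
    _ = εγL X Y := by
        rw [ExactPairing.coevaluation_evaluation]; monoidal
end Helpers5

section OmegaGamma
variable {C : Type} [Category C] [MonoidalCategory C] [RigidCategory C]

theorem omega_gamma (X Y : C) :
    ωinv (X ⊗ Y) ≫ lam (γmap Y X) = (ωinv X ⊗ₘ ωinv Y) ≫ γmapL (rd X) (rd Y) := by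
  apply ev_cancel (Z := rd Y ⊗ rd X)
  calc ((rd Y ⊗ rd X) ◁ (ωinv (X ⊗ Y) ≫ lam (γmap Y X))) ≫ ε_ (ld (rd Y ⊗ rd X)) (rd Y ⊗ rd X)
      = ((rd Y ⊗ rd X) ◁ ωinv (X ⊗ Y)) ≫ ((rd Y ⊗ rd X) ◁ lam (γmap Y X)) ≫
          ε_ (ld (rd Y ⊗ rd X)) (rd Y ⊗ rd X) := by
        simp [MonoidalCategory.whiskerLeft_comp]
    _ = ((rd Y ⊗ rd X) ◁ ωinv (X ⊗ Y)) ≫ (γmap Y X ▷ ld (rd (X ⊗ Y))) ≫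
          ε_ (ld (rd (X ⊗ Y))) (rd (X ⊗ Y)) := by
        rw [lam_ev (γmap Y X)]
    _ = (γmap Y X ▷ (X ⊗ Y)) ≫ (rd (X ⊗ Y) ◁ ωinv (X ⊗ Y)) ≫
          ε_ (ld (rd (X ⊗ Y))) (rd (X ⊗ Y)) := by
        rw [← whisker_exchange_assoc]
    _ = (γmap Y X ▷ (X ⊗ Y)) ≫ ε_ (X ⊗ Y) (rd (X ⊗ Y)) := by rw [omega_ev]
    _ = εγ X Y := gamma_ev X Y
    _ = 𝟙 _ ⊗≫ (rd Y ◁ (((rd X ◁ ωinv X) ≫ ε_ (ld (rd X)) (rd X)) ▷ Y)) ⊗≫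
          ((rd Y ◁ ωinv Y) ≫ ε_ (ld (rd Y)) (rd Y)) ⊗≫ 𝟙 _ := by
        rw [omega_ev X, omega_ev Y]; dsimp [εγ]; monoidal
    _ = 𝟙 _ ⊗≫ ((rd Y ◁ ((rd X ◁ ωinv X) ≫ ε_ (ld (rd X)) (rd X))) ▷ Y ≫
          tensorObj (rd Y) (𝟙_ C) ◁ ωinv Y) ⊗≫ ε_ (ld (rd Y)) (rd Y) ⊗≫ 𝟙 _ := by
        monoidal
    _ = 𝟙 _ ⊗≫ (tensorObj (rd Y) (tensorObj (rd X) X) ◁ ωinv Y ≫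
          (rd Y ◁ ((rd X ◁ ωinv X) ≫ ε_ (ld (rd X)) (rd X))) ▷ ld (rd Y)) ⊗≫
          ε_ (ld (rd Y)) (rd Y) ⊗≫ 𝟙 _ := by
        rw [← whisker_exchange]
    _ = ((rd Y ⊗ rd X) ◁ (ωinv X ⊗ₘ ωinv Y)) ≫ εγL (rd X) (rd Y) := by
        rw [tensorHom_def']; dsimp [εγL]; monoidal
    _ = ((rd Y ⊗ rd X) ◁ (ωinv X ⊗ₘ ωinv Y)) ≫ (((rd Y ⊗ rd X) ◁ γmapL (rd X) (rd Y)) ≫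
          ε_ (ld (rd Y ⊗ rd X)) (rd Y ⊗ rd X)) := by
        rw [gammaL_ev (rd X) (rd Y)]
    _ = ((rd Y ⊗ rd X) ◁ ((ωinv X ⊗ₘ ωinv Y) ≫ γmapL (rd X) (rd Y))) ≫
          ε_ (ld (rd Y ⊗ rd X)) (rd Y ⊗ rd X) := by
        simp [MonoidalCategory.whiskerLeft_comp]

end OmegaGamma
section Helpers6
open CategoryTheory MonoidalCategory
variable {C : Type} [Category C] [MonoidalCategory C] [RigidCategory C]

theorem jepi_A2 (A : CentralMonadA2 C) (V : C) : JEpi (A.ι V) := by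
  intro W h₁ h₂ h
  obtain ⟨u, -, huniq⟩ := A.universal V W (fun X => A.ι V X ≫ h₁) (fun {X Y} f => by
    rw [← Category.assoc, A.dinat, Category.assoc])
  exact (huniq h₁ fun X => rfl).trans (huniq h₂ fun X => (h X).symm).symm

theorem jepi_A3 (A : CentralMonadA3 C) (V : C) : JEpi (A.ι V) := by
  intro W h₁ h₂ h
  obtain ⟨u, -, huniq⟩ := A.universal V W (fun X => A.ι V X ≫ h₁) (fun {X Y} f => by
    rw [← Category.assoc, A.dinat, Category.assoc])
  exact (huniq h₁ fun X => rfl).trans (huniq h₂ fun X => (h X).symm).symm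

theorem jepi_A1 {P : PivotalData C} (A : CentralMonadA1 C P) (V : C) : JEpi (A.ι V) := by
  intro W h₁ h₂ h
  obtain ⟨u, -, huniq⟩ := A.universal V W (fun X => A.ι V X ≫ h₁) (fun {X Y} f => by
    rw [← Category.assoc, A.dinat, Category.assoc])
  exact (huniq h₁ fun X => rfl).trans (huniq h₂ fun X => (h X).symm).symm

theorem jepi_A4 {P : PivotalData C} (A : CentralMonadA4 C P) (V : C) : JEpi (A.ι V) := by
  intro W h₁ h₂ h
  obtain ⟨u, -, huniq⟩ := A.universal V W (fun X => A.ι V X ≫ h₁) (fun {X Y} f => by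
    rw [← Category.assoc, A.dinat, Category.assoc])
  exact (huniq h₁ fun X => rfl).trans (huniq h₂ fun X => (h X).symm).symm

theorem ext2_A2 (A : CentralMonadA2 C) (V : C) {W : C}
    {h₁ h₂ : A.M.A.obj (A.M.A.obj V) ⟶ W}
    (h : ∀ X Y : C, (rd Y ◁ (A.ι V X ▷ Y)) ≫ A.ι (A.M.A.obj V) Y ≫ h₁
        = (rd Y ◁ (A.ι V X ▷ Y)) ≫ A.ι (A.M.A.obj V) Y ≫ h₂) : h₁ = h₂ := by
  refine jepi_A2 A _ h₁ h₂ fun Y => ?_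
  refine JEpi.whiskerLeft (JEpi.whiskerRight (jepi_A2 A V) Y) (rd Y) _ _ fun X => ?_
  simpa using h X Y

theorem ext2_A3 (A : CentralMonadA3 C) (V : C) {W : C}
    {h₁ h₂ : A.M.A.obj (A.M.A.obj V) ⟶ W}
    (h : ∀ X Y : C, ((Y ◁ A.ι V X) ▷ ld Y) ≫ A.ι (A.M.A.obj V) Y ≫ h₁
        = ((Y ◁ A.ι V X) ▷ ld Y) ≫ A.ι (A.M.A.obj V) Y ≫ h₂) : h₁ = h₂ := by
  refine jepi_A3 A _ h₁ h₂ fun Y => ?_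
  refine JEpi.whiskerRight (JEpi.whiskerLeft (jepi_A3 A V) Y) (ld Y) _ _ fun X => ?_
  simpa using h X Y

theorem ext2_A1 {P : PivotalData C} (A : CentralMonadA1 C P) (V : C) {W : C}
    {h₁ h₂ : A.M.A.obj (A.M.A.obj V) ⟶ W}
    (h : ∀ X Y : C, (ld Y ◁ (A.ι V X ▷ Y)) ≫ A.ι (A.M.A.obj V) Y ≫ h₁
        = (ld Y ◁ (A.ι V X ▷ Y)) ≫ A.ι (A.M.A.obj V) Y ≫ h₂) : h₁ = h₂ := by
  refine jepi_A1 A _ h₁ h₂ fun Y => ?_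
  refine JEpi.whiskerLeft (JEpi.whiskerRight (jepi_A1 A V) Y) (ld Y) _ _ fun X => ?_
  simpa using h X Y

theorem ext2_A4 {P : PivotalData C} (A : CentralMonadA4 C P) (V : C) {W : C}
    {h₁ h₂ : A.M.A.obj (A.M.A.obj V) ⟶ W}
    (h : ∀ X Y : C, ((Y ◁ A.ι V X) ▷ rd Y) ≫ A.ι (A.M.A.obj V) Y ≫ h₁
        = ((Y ◁ A.ι V X) ▷ rd Y) ≫ A.ι (A.M.A.obj V) Y ≫ h₂) : h₁ = h₂ := by
  refine jepi_A4 A _ h₁ h₂ fun Y => ?_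
  refine JEpi.whiskerRight (JEpi.whiskerLeft (jepi_A4 A V) Y) (rd Y) _ _ fun X => ?_
  simpa using h X Y

end Helpers6
section K23
open CategoryTheory MonoidalCategory
variable {C : Type} [Category C] [MonoidalCategory C] [RigidCategory C]
variable (A2 : CentralMonadA2 C) (A3 : CentralMonadA3 C)
  (κ : ∀ V : C, A2.M.A.obj V ⟶ A3.M.A.obj V)
  (hκ : ∀ V X : C, A2.ι V X ≫ κ V
    = 𝟙 (rd X ⊗ (V ⊗ X)) ⊗≫ ((rd X ⊗ V) ◁ ωinv X) ≫ A3.ι V (rd X))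

include hκ

theorem k23_nat {V W : C} (f : V ⟶ W) :
    A2.M.A.map f ≫ κ W = κ V ≫ A3.M.A.map f := by
  refine jepi_A2 A2 V _ _ fun X => ?_
  calc A2.ι V X ≫ A2.M.A.map f ≫ κ W
      = (rd X ◁ (f ▷ X)) ≫ (A2.ι W X ≫ κ W) := by
        rw [← Category.assoc, ← A2.nat f X, Category.assoc]
    _ = (rd X ◁ (f ▷ X)) ≫ (𝟙 _ ⊗≫ ((rd X ⊗ W) ◁ ωinv X) ≫ A3.ι W (rd X)) := by
        rw [hκ]
    _ = 𝟙 _ ⊗≫ (((rd X ◁ f) ▷ X) ≫ ((rd X ⊗ W : C) ◁ ωinv X)) ≫ A3.ι W (rd X) := by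
        monoidal
    _ = 𝟙 _ ⊗≫ (((rd X ⊗ V : C) ◁ ωinv X) ≫ ((rd X ◁ f) ▷ ld (rd X))) ≫ A3.ι W (rd X) := by
        rw [whisker_exchange]
    _ = (𝟙 _ ⊗≫ (tensorObj (rd X) V ◁ ωinv X) ≫ A3.ι V (rd X)) ≫ A3.M.A.map f := by
        rw [Category.assoc, A3.nat f (rd X)]; monoidal
    _ = A2.ι V X ≫ κ V ≫ A3.M.A.map f := by rw [← hκ]; simp [Category.assoc]

theorem k23_eta (V : C) : A2.M.η V ≫ κ V = A3.M.η V := by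
  rw [A2.η_det, A3.η_det]
  calc ((λ_ V).inv ≫ (uDual C ⊗ₘ (ρ_ V).inv) ≫ A2.ι V (𝟙_ C)) ≫ κ V
      = (λ_ V).inv ≫ (uDual C ⊗ₘ (ρ_ V).inv) ≫ (A2.ι V (𝟙_ C) ≫ κ V) := by
        simp [Category.assoc]
    _ = (λ_ V).inv ≫ (uDual C ⊗ₘ (ρ_ V).inv) ≫
          (𝟙 _ ⊗≫ ((rd (𝟙_ C) ⊗ V) ◁ ωinv (𝟙_ C)) ≫ A3.ι V (rd (𝟙_ C))) := by
        rw [hκ]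
    _ = 𝟙 _ ⊗≫ ((uDual C ▷ V) ▷ 𝟙_ C ≫ (tensorObj (rd (𝟙_ C)) V) ◁ ωinv (𝟙_ C)) ≫
          A3.ι V (rd (𝟙_ C)) := by
        monoidal
    _ = 𝟙 _ ⊗≫ ((tensorObj (𝟙_ C) V) ◁ ωinv (𝟙_ C) ≫
          (uDual C ▷ V) ▷ ld (rd (𝟙_ C))) ≫ A3.ι V (rd (𝟙_ C)) := by
        rw [← whisker_exchange]
    _ = 𝟙 _ ⊗≫ ((tensorObj (𝟙_ C) V) ◁ ωinv (𝟙_ C)) ≫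
          (((uDual C ▷ V) ▷ ld (rd (𝟙_ C))) ≫ A3.ι V (rd (𝟙_ C))) := by
        monoidal
    _ = 𝟙 _ ⊗≫ ((tensorObj (𝟙_ C) V) ◁ ωinv (𝟙_ C)) ≫
          (((𝟙_ C ⊗ V) ◁ lam (uDual C)) ≫ A3.ι V (𝟙_ C)) := by
        rw [A3.dinat V (uDual C)]
    _ = 𝟙 _ ⊗≫ ((tensorObj (𝟙_ C) V) ◁ (ωinv (𝟙_ C) ≫ lam (uDual C))) ≫ A3.ι V (𝟙_ C) := by
        rw [MonoidalCategory.whiskerLeft_comp]; monoidal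
    _ = 𝟙 _ ⊗≫ ((tensorObj (𝟙_ C) V) ◁ uDualL C) ≫ A3.ι V (𝟙_ C) := by
        rw [omega_unit]
    _ = (λ_ V).inv ≫ (ρ_ (𝟙_ C ⊗ V)).inv ≫ ((𝟙_ C ⊗ V) ◁ uDualL C) ≫ A3.ι V (𝟙_ C) := by
        monoidal

theorem k23_M0 : κ (𝟙_ C) ≫ A3.M0 = A2.M0 := by
  refine jepi_A2 A2 (𝟙_ C) _ _ fun X => ?_
  calc A2.ι (𝟙_ C) X ≫ κ (𝟙_ C) ≫ A3.M0
      = (𝟙 _ ⊗≫ (tensorObj (rd X) (𝟙_ C) ◁ ωinv X) ≫ A3.ι (𝟙_ C) (rd X)) ≫ A3.M0 := by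
        rw [← Category.assoc, hκ]
    _ = 𝟙 _ ⊗≫ (tensorObj (rd X) (𝟙_ C) ◁ ωinv X) ≫ (A3.ι (𝟙_ C) (rd X) ≫ A3.M0) := by
        simp [monoidalComp, Category.assoc]
    _ = 𝟙 _ ⊗≫ (tensorObj (rd X) (𝟙_ C) ◁ ωinv X) ≫
          (((ρ_ (rd X)).hom ▷ ld (rd X)) ≫ ε_ (ld (rd X)) (rd X)) := by
        rw [A3.M0_det (rd X)]
    _ = 𝟙 _ ⊗≫ ((rd X ◁ ωinv X) ≫ ε_ (ld (rd X)) (rd X)) ⊗≫ 𝟙 _ := by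
        monoidal
    _ = 𝟙 _ ⊗≫ ε_ X (rd X) ⊗≫ 𝟙 _ := by rw [omega_ev]
    _ = (rd X ◁ (λ_ X).hom) ≫ ε_ X (rd X) := by monoidal
    _ = A2.ι (𝟙_ C) X ≫ A2.M0 := (A2.M0_det X).symm

end K23
section K23b
open CategoryTheory MonoidalCategory
variable {C : Type} [Category C] [MonoidalCategory C] [RigidCategory C]

theorem M2_prefix (U V X : C) :
    𝟙 (rd X ⊗ ((U ⊗ V) ⊗ X)) ⊗≫ (tensorObj (rd X) (tensorObj U V) ◁ ωinv X) ⊗≫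
        (tensorObj (rd X) U ◁ (η_ (ld (rd X)) (rd X) ▷ tensorObj V (ld (rd X)))) ⊗≫
        𝟙 (tensorObj (tensorObj (rd X) (tensorObj U (ld (rd X))))
            (tensorObj (rd X) (tensorObj V (ld (rd X)))))
      = 𝟙 (rd X ⊗ ((U ⊗ V) ⊗ X)) ⊗≫ (tensorObj (rd X) U ◁ (η_ X (rd X) ▷ tensorObj V X)) ⊗≫
          ((𝟙 (tensorObj (rd X) (tensorObj U X)) ⊗≫ (tensorObj (rd X) U ◁ ωinv X) ⊗≫
              𝟙 (tensorObj (rd X) (tensorObj U (ld (rd X))))) ⊗ₘ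
            (𝟙 (tensorObj (rd X) (tensorObj V X)) ⊗≫ (tensorObj (rd X) V ◁ ωinv X) ⊗≫
              𝟙 (tensorObj (rd X) (tensorObj V (ld (rd X)))))) ⊗≫
          𝟙 (tensorObj (tensorObj (rd X) (tensorObj U (ld (rd X))))
            (tensorObj (rd X) (tensorObj V (ld (rd X))))) := by
  calc 𝟙 (rd X ⊗ ((U ⊗ V) ⊗ X)) ⊗≫ (tensorObj (rd X) (tensorObj U V) ◁ ωinv X) ⊗≫
        (tensorObj (rd X) U ◁ (η_ (ld (rd X)) (rd X) ▷ tensorObj V (ld (rd X)))) ⊗≫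
        𝟙 (tensorObj (tensorObj (rd X) (tensorObj U (ld (rd X))))
            (tensorObj (rd X) (tensorObj V (ld (rd X)))))
      = 𝟙 _ ⊗≫ ((tensorObj (tensorObj (rd X) U) V ◁ ωinv X) ≫
          ((tensorObj (rd X) U ◁ ((λ_ V).inv ≫ η_ (ld (rd X)) (rd X) ▷ V)) ▷ ld (rd X))) ⊗≫
          𝟙 _ := by
        monoidal
    _ = 𝟙 _ ⊗≫ ((tensorObj (rd X) U ◁ ((λ_ V).inv ≫ η_ (ld (rd X)) (rd X) ▷ V)) ▷ X ≫
          (tensorObj (tensorObj (rd X) U) (tensorObj (tensorObj (ld (rd X)) (rd X)) V) ◁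
            ωinv X)) ⊗≫ 𝟙 _ := by
        rw [whisker_exchange]
    _ = 𝟙 _ ⊗≫ ((tensorObj (rd X) U ◁ ((λ_ V).inv ≫ (η_ X (rd X) ≫ ωinv X ▷ rd X) ▷ V)) ▷ X ≫
          (tensorObj (tensorObj (rd X) U) (tensorObj (tensorObj (ld (rd X)) (rd X)) V) ◁
            ωinv X)) ⊗≫ 𝟙 _ := by
        rw [coev_omega]
    _ = _ := by
        rw [MonoidalCategory.tensorHom_def]; monoidal

end K23b
section K23c
open CategoryTheory MonoidalCategory
variable {C : Type} [Category C] [MonoidalCategory C] [RigidCategory C]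
variable (A2 : CentralMonadA2 C) (A3 : CentralMonadA3 C)
  (κ : ∀ V : C, A2.M.A.obj V ⟶ A3.M.A.obj V)
  (hκ : ∀ V X : C, A2.ι V X ≫ κ V
    = 𝟙 (rd X ⊗ (V ⊗ X)) ⊗≫ ((rd X ⊗ V) ◁ ωinv X) ≫ A3.ι V (rd X))

include hκ

theorem k23_M2 (U V : C) : κ (U ⊗ V) ≫ A3.M2 U V = A2.M2 U V ≫ (κ U ⊗ₘ κ V) := by
  refine jepi_A2 A2 (U ⊗ V) _ _ fun X => ?_
  calc A2.ι (U ⊗ V) X ≫ κ (U ⊗ V) ≫ A3.M2 U V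
      = 𝟙 _ ⊗≫ (tensorObj (rd X) (tensorObj U V) ◁ ωinv X) ≫
          (A3.ι (U ⊗ V) (rd X) ≫ A3.M2 U V) := by
        rw [← Category.assoc, hκ]; simp only [monoidalComp, Category.assoc]
    _ = 𝟙 _ ⊗≫ (tensorObj (rd X) (tensorObj U V) ◁ ωinv X) ≫
          (𝟙 _ ⊗≫ (tensorObj (rd X) U ◁ (η_ (ld (rd X)) (rd X) ▷ tensorObj V (ld (rd X)))) ⊗≫
            (A3.ι U (rd X) ▷ tensorObj (tensorObj (rd X) V) (ld (rd X))) ⊗≫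
            (A3.M.A.obj U ◁ A3.ι V (rd X)) ⊗≫ 𝟙 _) := by
        rw [A3.M2_det U V (rd X), MonoidalCategory.tensorHom_def]; monoidal
    _ = 𝟙 _ ⊗≫ ((tensorObj (tensorObj (rd X) U) V ◁ ωinv X) ≫
          ((tensorObj (rd X) U ◁ ((λ_ V).inv ≫ η_ (ld (rd X)) (rd X) ▷ V)) ▷ ld (rd X))) ⊗≫
          (A3.ι U (rd X) ▷ tensorObj (tensorObj (rd X) V) (ld (rd X))) ⊗≫
          (A3.M.A.obj U ◁ A3.ι V (rd X)) ⊗≫ 𝟙 _ := by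
        monoidal
    _ = 𝟙 _ ⊗≫ ((tensorObj (rd X) U ◁ ((λ_ V).inv ≫ η_ (ld (rd X)) (rd X) ▷ V)) ▷ X ≫
          (tensorObj (tensorObj (rd X) U) (tensorObj (tensorObj (ld (rd X)) (rd X)) V) ◁
            ωinv X)) ⊗≫
          (A3.ι U (rd X) ▷ tensorObj (tensorObj (rd X) V) (ld (rd X))) ⊗≫
          (A3.M.A.obj U ◁ A3.ι V (rd X)) ⊗≫ 𝟙 _ := by
        rw [whisker_exchange]
    _ = 𝟙 _ ⊗≫ ((tensorObj (rd X) U ◁ ((λ_ V).inv ≫ η_ (ld (rd X)) (rd X) ▷ V)) ▷ X) ⊗≫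
          ((tensorObj (tensorObj (tensorObj (rd X) U) (ld (rd X))) (tensorObj (rd X) V) ◁
              ωinv X) ≫
            ((A3.ι U (rd X) ▷ tensorObj (rd X) V) ▷ ld (rd X))) ⊗≫
          (A3.M.A.obj U ◁ A3.ι V (rd X)) ⊗≫ 𝟙 _ := by
        monoidal
    _ = 𝟙 _ ⊗≫ ((tensorObj (rd X) U ◁ ((λ_ V).inv ≫ η_ (ld (rd X)) (rd X) ▷ V)) ▷ X) ⊗≫
          (((A3.ι U (rd X) ▷ tensorObj (rd X) V) ▷ X) ≫
            (tensorObj (A3.M.A.obj U) (tensorObj (rd X) V) ◁ ωinv X)) ⊗≫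
          (A3.M.A.obj U ◁ A3.ι V (rd X)) ⊗≫ 𝟙 _ := by
        rw [whisker_exchange]
    _ = 𝟙 _ ⊗≫ (tensorObj (rd X) U ◁ (η_ X (rd X) ▷ tensorObj V X)) ⊗≫
          ((𝟙 (rd X ⊗ (U ⊗ X)) ⊗≫ ((rd X ⊗ U) ◁ ωinv X) ≫ A3.ι U (rd X)) ▷
            tensorObj (rd X) (tensorObj V X)) ⊗≫
          (A3.M.A.obj U ◁ (𝟙 (rd X ⊗ (V ⊗ X)) ⊗≫ ((rd X ⊗ V) ◁ ωinv X) ≫ A3.ι V (rd X))) ⊗≫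
          𝟙 _ := by
        rw [← coev_omega X]; monoidal
    _ = 𝟙 _ ⊗≫ (tensorObj (rd X) U ◁ (η_ X (rd X) ▷ tensorObj V X)) ⊗≫
          ((A2.ι U X ≫ κ U) ▷ tensorObj (rd X) (tensorObj V X)) ⊗≫
          (A3.M.A.obj U ◁ (A2.ι V X ≫ κ V)) ⊗≫ 𝟙 _ := by
        rw [hκ U X, hκ V X]
    _ = A2.ι (U ⊗ V) X ≫ A2.M2 U V ≫ (κ U ⊗ₘ κ V) := by
        conv_rhs => rw [← Category.assoc, A2.M2_det U V X]
        simp only [monoidalComp, Category.assoc]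
        conv_rhs => rw [MonoidalCategory.tensorHom_comp_tensorHom, MonoidalCategory.tensorHom_def]
        monoidal
end K23c
section K23mu
open CategoryTheory MonoidalCategory
variable {C : Type} [Category C] [MonoidalCategory C] [RigidCategory C]
variable (A2 : CentralMonadA2 C) (A3 : CentralMonadA3 C)
  (κ : ∀ V : C, A2.M.A.obj V ⟶ A3.M.A.obj V)
  (hκ : ∀ V X : C, A2.ι V X ≫ κ V
    = 𝟙 (rd X ⊗ (V ⊗ X)) ⊗≫ ((rd X ⊗ V) ◁ ωinv X) ≫ A3.ι V (rd X))

include hκ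

theorem k23_mu (V : C) :
    A2.M.μ V ≫ κ V = A2.M.A.map (κ V) ≫ κ (A3.M.A.obj V) ≫ A3.M.μ V := by
  refine ext2_A2 A2 V fun X Y => ?_
  have hL : (rd Y ◁ (A2.ι V X ▷ Y)) ≫ A2.ι (A2.M.A.obj V) Y ≫ A2.M.μ V ≫ κ V
      = 𝟙 _ ⊗≫ (tensorObj (tensorObj (rd Y) (rd X)) V ◁
          ((ωinv X ⊗ₘ ωinv Y) ≫ γmapL (rd X) (rd Y))) ≫ A3.ι V (rd Y ⊗ rd X) := by
    calc (rd Y ◁ (A2.ι V X ▷ Y)) ≫ A2.ι (A2.M.A.obj V) Y ≫ A2.M.μ V ≫ κ V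
        = ((rd Y ◁ (A2.ι V X ▷ Y)) ≫ A2.ι (A2.M.A.obj V) Y ≫ A2.M.μ V) ≫ κ V := by
          simp only [Category.assoc]
      _ = (𝟙 _ ⊗≫ (γmap Y X ▷ (V ⊗ (X ⊗ Y))) ≫ A2.ι V (X ⊗ Y)) ≫ κ V := by
          rw [A2.μ_det V X Y]
      _ = 𝟙 _ ⊗≫ (γmap Y X ▷ tensorObj V (tensorObj X Y)) ≫ (A2.ι V (X ⊗ Y) ≫ κ V) := by
          simp only [monoidalComp, Category.assoc]
      _ = 𝟙 _ ⊗≫ (((γmap Y X ▷ V) ▷ tensorObj X Y) ≫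
            (tensorObj (rd (X ⊗ Y)) V ◁ ωinv (X ⊗ Y))) ≫ A3.ι V (rd (X ⊗ Y)) := by
          rw [hκ]; monoidal
      _ = 𝟙 _ ⊗≫ ((tensorObj (tensorObj (rd Y) (rd X)) V ◁ ωinv (X ⊗ Y)) ≫
            ((γmap Y X ▷ V) ▷ ld (rd (X ⊗ Y)))) ≫ A3.ι V (rd (X ⊗ Y)) := by
          rw [← whisker_exchange]
      _ = 𝟙 _ ⊗≫ (tensorObj (tensorObj (rd Y) (rd X)) V ◁ ωinv (X ⊗ Y)) ≫
            (((γmap Y X ▷ V) ▷ ld (rd (X ⊗ Y))) ≫ A3.ι V (rd (X ⊗ Y))) := by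
          simp only [monoidalComp, Category.assoc]
      _ = 𝟙 _ ⊗≫ (tensorObj (tensorObj (rd Y) (rd X)) V ◁ ωinv (X ⊗ Y)) ≫
            ((((rd Y ⊗ rd X) ⊗ V) ◁ lam (γmap Y X)) ≫ A3.ι V (rd Y ⊗ rd X)) := by
          rw [A3.dinat V (γmap Y X)]
      _ = 𝟙 _ ⊗≫ (tensorObj (tensorObj (rd Y) (rd X)) V ◁
            (ωinv (X ⊗ Y) ≫ lam (γmap Y X))) ≫ A3.ι V (rd Y ⊗ rd X) := by
          rw [MonoidalCategory.whiskerLeft_comp]; simp only [Category.assoc]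
      _ = 𝟙 _ ⊗≫ (tensorObj (tensorObj (rd Y) (rd X)) V ◁
            ((ωinv X ⊗ₘ ωinv Y) ≫ γmapL (rd X) (rd Y))) ≫ A3.ι V (rd Y ⊗ rd X) := by
          rw [omega_gamma X Y]
  have hR : (rd Y ◁ (A2.ι V X ▷ Y)) ≫ A2.ι (A2.M.A.obj V) Y ≫
        A2.M.A.map (κ V) ≫ κ (A3.M.A.obj V) ≫ A3.M.μ V
      = 𝟙 _ ⊗≫ (tensorObj (tensorObj (rd Y) (rd X)) V ◁
          ((ωinv X ⊗ₘ ωinv Y) ≫ γmapL (rd X) (rd Y))) ≫ A3.ι V (rd Y ⊗ rd X) := by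
    calc (rd Y ◁ (A2.ι V X ▷ Y)) ≫ A2.ι (A2.M.A.obj V) Y ≫
          A2.M.A.map (κ V) ≫ κ (A3.M.A.obj V) ≫ A3.M.μ V
        = (rd Y ◁ ((A2.ι V X ≫ κ V) ▷ Y)) ≫
            (A2.ι (A3.M.A.obj V) Y ≫ κ (A3.M.A.obj V)) ≫ A3.M.μ V := by
          slice_lhs 2 3 => rw [← A2.nat (κ V) Y]
          slice_lhs 1 2 => rw [← MonoidalCategory.whiskerLeft_comp, ← comp_whiskerRight]
          simp only [Category.assoc]
      _ = (rd Y ◁ ((𝟙 _ ⊗≫ (tensorObj (rd X) V ◁ ωinv X) ≫ A3.ι V (rd X)) ▷ Y)) ≫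
            (𝟙 _ ⊗≫ (tensorObj (rd Y) (A3.M.A.obj V) ◁ ωinv Y) ≫
              A3.ι (A3.M.A.obj V) (rd Y)) ≫ A3.M.μ V := by
          rw [hκ V X, hκ (A3.M.A.obj V) Y]
      _ = 𝟙 (rd Y ⊗ ((rd X ⊗ (V ⊗ X)) ⊗ Y)) ⊗≫
            (((rd Y ◁ (𝟙 (rd X ⊗ (V ⊗ X)) ⊗≫ (tensorObj (rd X) V ◁ ωinv X) ≫
                A3.ι V (rd X))) ▷ Y) ≫
              (tensorObj (rd Y) (A3.M.A.obj V) ◁ ωinv Y)) ⊗≫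
            (A3.ι (A3.M.A.obj V) (rd Y) ≫ A3.M.μ V) ⊗≫ 𝟙 (A3.M.A.obj V) := by
          monoidal
      _ = 𝟙 (rd Y ⊗ ((rd X ⊗ (V ⊗ X)) ⊗ Y)) ⊗≫
            ((tensorObj (rd Y) (tensorObj (rd X) (tensorObj V X)) ◁ ωinv Y) ≫
              ((rd Y ◁ (𝟙 (rd X ⊗ (V ⊗ X)) ⊗≫ (tensorObj (rd X) V ◁ ωinv X) ≫
                A3.ι V (rd X))) ▷ ld (rd Y))) ⊗≫
            (A3.ι (A3.M.A.obj V) (rd Y) ≫ A3.M.μ V) ⊗≫ 𝟙 (A3.M.A.obj V) := by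
          rw [← whisker_exchange]
      _ = 𝟙 _ ⊗≫ (tensorObj (rd Y) (tensorObj (rd X) (tensorObj V X)) ◁ ωinv Y) ⊗≫
            ((rd Y ◁ (tensorObj (rd X) V ◁ ωinv X)) ▷ ld (rd Y)) ⊗≫
            (((rd Y ◁ A3.ι V (rd X)) ▷ ld (rd Y)) ≫ A3.ι (A3.M.A.obj V) (rd Y) ≫
              A3.M.μ V) ⊗≫ 𝟙 _ := by
          monoidal
      _ = 𝟙 _ ⊗≫ (tensorObj (rd Y) (tensorObj (rd X) (tensorObj V X)) ◁ ωinv Y) ⊗≫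
            ((rd Y ◁ (tensorObj (rd X) V ◁ ωinv X)) ▷ ld (rd Y)) ⊗≫
            (𝟙 _ ⊗≫ (((rd Y ⊗ rd X) ⊗ V) ◁ γmapL (rd X) (rd Y)) ≫
              A3.ι V (rd Y ⊗ rd X)) ⊗≫ 𝟙 _ := by
          rw [A3.μ_det V (rd X) (rd Y)]
      _ = 𝟙 _ ⊗≫ (tensorObj (tensorObj (rd Y) (rd X)) V ◁
            ((ωinv X ⊗ₘ ωinv Y) ≫ γmapL (rd X) (rd Y))) ≫ A3.ι V (rd Y ⊗ rd X) := by
          rw [MonoidalCategory.whiskerLeft_comp, tensorHom_def']; monoidal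
  exact hL.trans hR.symm

end K23mu
section K23iso
open CategoryTheory MonoidalCategory
variable {C : Type} [Category C] [MonoidalCategory C] [RigidCategory C]
variable (A2 : CentralMonadA2 C) (A3 : CentralMonadA3 C)
  (κ : ∀ V : C, A2.M.A.obj V ⟶ A3.M.A.obj V)
  (hκ : ∀ V X : C, A2.ι V X ≫ κ V
    = 𝟙 (rd X ⊗ (V ⊗ X)) ⊗≫ ((rd X ⊗ V) ◁ ωinv X) ≫ A3.ι V (rd X))

include hκ

theorem k23_iso (V : C) : IsIso (κ V) := by
  have hdin : ∀ {X Y : C} (f : X ⟶ Y),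
      ((f ▷ V) ▷ ld Y) ≫ (((ψm Y ▷ V) ▷ ld Y) ≫ (α_ _ _ _).hom ≫ A2.ι V (ld Y))
        = ((X ⊗ V) ◁ leftAdjointMate f) ≫
            (((ψm X ▷ V) ▷ ld X) ≫ (α_ _ _ _).hom ≫ A2.ι V (ld X)) := by
    intro X Y f
    calc ((f ▷ V) ▷ ld Y) ≫ (((ψm Y ▷ V) ▷ ld Y) ≫ (α_ _ _ _).hom ≫ A2.ι V (ld Y))
        = (((f ≫ ψm Y) ▷ V) ▷ ld Y) ≫ (α_ _ _ _).hom ≫ A2.ι V (ld Y) := by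
          simp only [comp_whiskerRight, Category.assoc]
      _ = (((ψm X ≫ ram (lam f)) ▷ V) ▷ ld Y) ≫ (α_ _ _ _).hom ≫ A2.ι V (ld Y) := by
          rw [psi_nat]
      _ = ((ψm X ▷ V) ▷ ld Y) ≫ (α_ _ _ _).hom ≫
            ((ram (lam f) ▷ (V ⊗ ld Y)) ≫ A2.ι V (ld Y)) := by
          monoidal
      _ = ((ψm X ▷ V) ▷ ld Y) ≫ (α_ _ _ _).hom ≫
            ((rd (ld X) ◁ (V ◁ lam f)) ≫ A2.ι V (ld X)) := by
          rw [A2.dinat V (lam f)]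
      _ = ((ψm X ▷ V) ▷ ld Y) ≫ (tensorObj (rd (ld X)) V ◁ lam f) ≫
            (α_ _ _ _).hom ≫ A2.ι V (ld X) := by
          monoidal
      _ = ((X ⊗ V) ◁ leftAdjointMate f) ≫
            (((ψm X ▷ V) ▷ ld X) ≫ (α_ _ _ _).hom ≫ A2.ι V (ld X)) := by
          rw [whisker_exchange_assoc]
  obtain ⟨κ', hκ', -⟩ := A3.universal V (A2.M.A.obj V)
    (fun X => ((ψm X ▷ V) ▷ ld X) ≫ (α_ _ _ _).hom ≫ A2.ι V (ld X)) hdin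
  refine ⟨κ', ?_, ?_⟩
  · refine jepi_A2 A2 V _ _ fun X => ?_
    rw [Category.comp_id]
    calc A2.ι V X ≫ κ V ≫ κ'
        = (𝟙 _ ⊗≫ (tensorObj (rd X) V ◁ ωinv X) ≫ A3.ι V (rd X)) ≫ κ' := by
          rw [← Category.assoc, hκ]
      _ = 𝟙 _ ⊗≫ (tensorObj (rd X) V ◁ ωinv X) ≫ (A3.ι V (rd X) ≫ κ') := by
          simp only [monoidalComp, Category.assoc]
      _ = 𝟙 _ ⊗≫ (tensorObj (rd X) V ◁ ωinv X) ≫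
            (((ψm (rd X) ▷ V) ▷ ld (rd X)) ≫ (α_ _ _ _).hom ≫ A2.ι V (ld (rd X))) := by
          rw [hκ' (rd X)]
      _ = 𝟙 _ ⊗≫ ((ψm (rd X) ▷ V) ▷ X) ≫
            ((tensorObj (rd (ld (rd X))) V ◁ ωinv X) ≫ (α_ _ _ _).hom ≫
              A2.ι V (ld (rd X))) := by
          rw [whisker_exchange_assoc]; try monoidal
      _ = 𝟙 _ ⊗≫ ((ψm (rd X) ▷ V) ▷ X) ≫ (α_ _ _ _).hom ≫
            ((rd (ld (rd X)) ◁ (V ◁ ωinv X)) ≫ A2.ι V (ld (rd X))) := by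
          monoidal
      _ = 𝟙 _ ⊗≫ ((ψm (rd X) ▷ V) ▷ X) ≫ (α_ _ _ _).hom ≫
            ((ram (ωinv X) ▷ (V ⊗ X)) ≫ A2.ι V X) := by
          rw [← A2.dinat V (ωinv X)]
      _ = 𝟙 _ ⊗≫ (((ψm (rd X) ≫ ram (ωinv X)) ▷ V) ▷ X) ≫ (α_ _ _ _).hom ≫ A2.ι V X := by
          monoidal
      _ = A2.ι V X := by
          rw [psi_omega]; try monoidal
  · refine jepi_A3 A3 V _ _ fun X => ?_
    rw [Category.comp_id]
    calc A3.ι V X ≫ κ' ≫ κ V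
        = (((ψm X ▷ V) ▷ ld X) ≫ (α_ _ _ _).hom ≫ A2.ι V (ld X)) ≫ κ V := by
          rw [← Category.assoc, hκ' X]
      _ = ((ψm X ▷ V) ▷ ld X) ≫ (α_ _ _ _).hom ≫ (A2.ι V (ld X) ≫ κ V) := by
          simp only [Category.assoc]
      _ = ((ψm X ▷ V) ▷ ld X) ≫ (α_ _ _ _).hom ≫
            (𝟙 _ ⊗≫ (tensorObj (rd (ld X)) V ◁ ωinv (ld X)) ≫ A3.ι V (rd (ld X))) := by
          rw [hκ V (ld X)]
      _ = 𝟙 _ ⊗≫ (((ψm X ▷ V) ▷ ld X) ≫ (tensorObj (rd (ld X)) V ◁ ωinv (ld X))) ≫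
            A3.ι V (rd (ld X)) := by
          monoidal
      _ = 𝟙 _ ⊗≫ ((tensorObj X V ◁ ωinv (ld X)) ≫ ((ψm X ▷ V) ▷ ld (rd (ld X)))) ≫
            A3.ι V (rd (ld X)) := by
          rw [← whisker_exchange]
      _ = 𝟙 _ ⊗≫ (tensorObj X V ◁ ωinv (ld X)) ≫
            (((ψm X ▷ V) ▷ ld (rd (ld X))) ≫ A3.ι V (rd (ld X))) := by
          simp only [monoidalComp, Category.assoc]
      _ = 𝟙 _ ⊗≫ (tensorObj X V ◁ ωinv (ld X)) ≫
            (((X ⊗ V) ◁ lam (ψm X)) ≫ A3.ι V X) := by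
          rw [A3.dinat V (ψm X)]
      _ = 𝟙 _ ⊗≫ (tensorObj X V ◁ (ωinv (ld X) ≫ lam (ψm X))) ≫ A3.ι V X := by
          rw [MonoidalCategory.whiskerLeft_comp]; simp only [Category.assoc]
      _ = A3.ι V X := by
          rw [omega_psi]; monoidal

end K23iso
section K12
open CategoryTheory MonoidalCategory
variable {C : Type} [Category C] [MonoidalCategory C] [RigidCategory C]

theorem pnat' (P : PivotalData C) {X Y : C} (f : X ⟶ Y) :
    (P.p Y).inv ≫ lam f = ram f ≫ (P.p X).inv := by
  rw [Iso.inv_comp_eq, ← Category.assoc, ← P.nat f, Category.assoc,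
    Iso.hom_inv_id, Category.comp_id]

variable {P : PivotalData C} (A1 : CentralMonadA1 C P) (A2 : CentralMonadA2 C)
  (κ : ∀ V : C, A1.M.A.obj V ⟶ A2.M.A.obj V)
  (hκ : ∀ V X : C, A1.ι V X ≫ κ V = ((P.p X).hom ▷ (V ⊗ X)) ≫ A2.ι V X)

include hκ

theorem k12_nat {V W : C} (f : V ⟶ W) :
    A1.M.A.map f ≫ κ W = κ V ≫ A2.M.A.map f := by
  refine jepi_A1 A1 V _ _ fun X => ?_
  calc A1.ι V X ≫ A1.M.A.map f ≫ κ W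
      = (ld X ◁ (f ▷ X)) ≫ (A1.ι W X ≫ κ W) := by
        rw [← Category.assoc, ← A1.nat f X, Category.assoc]
    _ = (ld X ◁ (f ▷ X)) ≫ ((P.p X).hom ▷ (W ⊗ X)) ≫ A2.ι W X := by rw [hκ]
    _ = ((P.p X).hom ▷ (V ⊗ X)) ≫ (rd X ◁ (f ▷ X)) ≫ A2.ι W X := by
        rw [whisker_exchange_assoc]
    _ = ((P.p X).hom ▷ (V ⊗ X)) ≫ A2.ι V X ≫ A2.M.A.map f := by rw [A2.nat f X]
    _ = A1.ι V X ≫ κ V ≫ A2.M.A.map f := by rw [← Category.assoc, ← hκ, Category.assoc]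

theorem k12_eta (V : C) : A1.M.η V ≫ κ V = A2.M.η V := by
  rw [A1.η_det, A2.η_det]
  have h : (uDualL C ⊗ₘ (ρ_ V).inv) ≫ ((P.p (𝟙_ C)).hom ▷ (V ⊗ 𝟙_ C))
      = uDual C ⊗ₘ (ρ_ V).inv := by
    rw [← tensorHom_id, MonoidalCategory.tensorHom_comp_tensorHom, Category.comp_id, P.unit]
  simp only [Category.assoc, hκ]
  rw [← Category.assoc (uDualL C ⊗ₘ (ρ_ V).inv), h]

theorem k12_M0 : κ (𝟙_ C) ≫ A2.M0 = A1.M0 := by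
  refine jepi_A1 A1 (𝟙_ C) _ _ fun X => ?_
  calc A1.ι (𝟙_ C) X ≫ κ (𝟙_ C) ≫ A2.M0
      = ((P.p X).hom ▷ (𝟙_ C ⊗ X)) ≫ (A2.ι (𝟙_ C) X ≫ A2.M0) := by
        rw [← Category.assoc, hκ, Category.assoc]
    _ = ((P.p X).hom ▷ (𝟙_ C ⊗ X)) ≫ (rd X ◁ (λ_ X).hom) ≫ ε_ X (rd X) := by
        rw [A2.M0_det]
    _ = (ld X ◁ (λ_ X).hom) ≫ ((P.p X).hom ▷ X) ≫ ε_ X (rd X) := by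
        rw [whisker_exchange_assoc]
    _ = A1.ι (𝟙_ C) X ≫ A1.M0 := (A1.M0_det X).symm

theorem k12_mu (V : C) :
    A1.M.μ V ≫ κ V = A1.M.A.map (κ V) ≫ κ (A2.M.A.obj V) ≫ A2.M.μ V := by
  refine ext2_A1 A1 V fun X Y => ?_
  have hL : (ld Y ◁ (A1.ι V X ▷ Y)) ≫ A1.ι (A1.M.A.obj V) Y ≫ A1.M.μ V ≫ κ V
      = 𝟙 _ ⊗≫ ((((P.p Y).hom ⊗ₘ (P.p X).hom) ≫ γmap Y X) ▷ tensorObj V (tensorObj X Y)) ≫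
          A2.ι V (X ⊗ Y) := by
    calc (ld Y ◁ (A1.ι V X ▷ Y)) ≫ A1.ι (A1.M.A.obj V) Y ≫ A1.M.μ V ≫ κ V
        = ((ld Y ◁ (A1.ι V X ▷ Y)) ≫ A1.ι (A1.M.A.obj V) Y ≫ A1.M.μ V) ≫ κ V := by
          simp only [Category.assoc]
      _ = (𝟙 _ ⊗≫ (γmapL Y X ▷ (V ⊗ (X ⊗ Y))) ≫ A1.ι V (X ⊗ Y)) ≫ κ V := by
          rw [A1.μ_det V X Y]
      _ = 𝟙 _ ⊗≫ (γmapL Y X ▷ tensorObj V (tensorObj X Y)) ≫ (A1.ι V (X ⊗ Y) ≫ κ V) := by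
          simp only [monoidalComp, Category.assoc]
      _ = 𝟙 _ ⊗≫ ((γmapL Y X ≫ (P.p (X ⊗ Y)).hom) ▷ tensorObj V (tensorObj X Y)) ≫
          A2.ι V (X ⊗ Y) := by
          rw [hκ]; monoidal
      _ = 𝟙 _ ⊗≫ ((((P.p Y).hom ⊗ₘ (P.p X).hom) ≫ γmap Y X) ▷ tensorObj V (tensorObj X Y)) ≫
          A2.ι V (X ⊗ Y) := by
          rw [← P.monoidal Y X]
  have hR : (ld Y ◁ (A1.ι V X ▷ Y)) ≫ A1.ι (A1.M.A.obj V) Y ≫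
        A1.M.A.map (κ V) ≫ κ (A2.M.A.obj V) ≫ A2.M.μ V
      = 𝟙 _ ⊗≫ ((((P.p Y).hom ⊗ₘ (P.p X).hom) ≫ γmap Y X) ▷ tensorObj V (tensorObj X Y)) ≫
          A2.ι V (X ⊗ Y) := by
    calc (ld Y ◁ (A1.ι V X ▷ Y)) ≫ A1.ι (A1.M.A.obj V) Y ≫
          A1.M.A.map (κ V) ≫ κ (A2.M.A.obj V) ≫ A2.M.μ V
        = (ld Y ◁ ((A1.ι V X ≫ κ V) ▷ Y)) ≫
            (A1.ι (A2.M.A.obj V) Y ≫ κ (A2.M.A.obj V)) ≫ A2.M.μ V := by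
          slice_lhs 2 3 => rw [← A1.nat (κ V) Y]
          slice_lhs 1 2 => rw [← MonoidalCategory.whiskerLeft_comp, ← comp_whiskerRight]
          simp only [Category.assoc]
      _ = (ld Y ◁ ((((P.p X).hom ▷ (V ⊗ X)) ≫ A2.ι V X) ▷ Y)) ≫
            (((P.p Y).hom ▷ (A2.M.A.obj V ⊗ Y)) ≫ A2.ι (A2.M.A.obj V) Y) ≫ A2.M.μ V := by
          rw [hκ V X, hκ (A2.M.A.obj V) Y]
      _ = 𝟙 _ ⊗≫ ((ld Y ◁ ((((P.p X).hom ▷ (V ⊗ X)) ≫ A2.ι V X) ▷ Y)) ≫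
            ((P.p Y).hom ▷ tensorObj (A2.M.A.obj V) Y)) ⊗≫
            (A2.ι (A2.M.A.obj V) Y ≫ A2.M.μ V) ⊗≫ 𝟙 _ := by
          monoidal
      _ = 𝟙 _ ⊗≫ (((P.p Y).hom ▷ tensorObj (tensorObj (ld X) (tensorObj V X)) Y) ≫
            (rd Y ◁ ((((P.p X).hom ▷ (V ⊗ X)) ≫ A2.ι V X) ▷ Y))) ⊗≫
            (A2.ι (A2.M.A.obj V) Y ≫ A2.M.μ V) ⊗≫ 𝟙 _ := by
          rw [whisker_exchange]
      _ = 𝟙 _ ⊗≫ ((P.p Y).hom ▷ tensorObj (tensorObj (ld X) (tensorObj V X)) Y) ⊗≫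
            (rd Y ◁ (((P.p X).hom ▷ tensorObj V X) ▷ Y)) ⊗≫
            ((rd Y ◁ (A2.ι V X ▷ Y)) ≫ A2.ι (A2.M.A.obj V) Y ≫ A2.M.μ V) ⊗≫ 𝟙 _ := by
          monoidal
      _ = 𝟙 _ ⊗≫ ((P.p Y).hom ▷ tensorObj (tensorObj (ld X) (tensorObj V X)) Y) ⊗≫
            (rd Y ◁ (((P.p X).hom ▷ tensorObj V X) ▷ Y)) ⊗≫
            (𝟙 _ ⊗≫ (γmap Y X ▷ (V ⊗ (X ⊗ Y))) ≫ A2.ι V (X ⊗ Y)) ⊗≫ 𝟙 _ := by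
          rw [A2.μ_det V X Y]
      _ = 𝟙 _ ⊗≫ ((((P.p Y).hom ⊗ₘ (P.p X).hom) ≫ γmap Y X) ▷ tensorObj V (tensorObj X Y)) ≫
          A2.ι V (X ⊗ Y) := by
          rw [MonoidalCategory.tensorHom_def]; monoidal
  exact hL.trans hR.symm

theorem k12_M2 (U V : C) : κ (U ⊗ V) ≫ A2.M2 U V = A1.M2 U V ≫ (κ U ⊗ₘ κ V) := by
  refine jepi_A1 A1 (U ⊗ V) _ _ fun X => ?_
  have hL : A1.ι (U ⊗ V) X ≫ κ (U ⊗ V) ≫ A2.M2 U V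
      = 𝟙 _ ⊗≫ ((P.p X).hom ▷ tensorObj (tensorObj U V) X) ⊗≫
          (tensorObj (rd X) U ◁ (η_ X (rd X) ▷ tensorObj V X)) ⊗≫
          (A2.ι U X ▷ tensorObj (rd X) (tensorObj V X)) ⊗≫
          (A2.M.A.obj U ◁ A2.ι V X) ⊗≫ 𝟙 _ := by
    calc A1.ι (U ⊗ V) X ≫ κ (U ⊗ V) ≫ A2.M2 U V
        = ((P.p X).hom ▷ ((U ⊗ V) ⊗ X)) ≫ (A2.ι (U ⊗ V) X ≫ A2.M2 U V) := by
          rw [← Category.assoc, hκ, Category.assoc]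
      _ = ((P.p X).hom ▷ ((U ⊗ V) ⊗ X)) ≫
            (𝟙 _ ⊗≫ ((rd X ⊗ U) ◁ (η_ X (rd X) ▷ (V ⊗ X))) ⊗≫ (A2.ι U X ⊗ₘ A2.ι V X)) := by
          rw [A2.M2_det U V X]
      _ = _ := by
          rw [MonoidalCategory.tensorHom_def]; monoidal
  have hR : A1.ι (U ⊗ V) X ≫ A1.M2 U V ≫ (κ U ⊗ₘ κ V)
      = 𝟙 _ ⊗≫ ((P.p X).hom ▷ tensorObj (tensorObj U V) X) ⊗≫
          (tensorObj (rd X) U ◁ (η_ X (rd X) ▷ tensorObj V X)) ⊗≫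
          (A2.ι U X ▷ tensorObj (rd X) (tensorObj V X)) ⊗≫
          (A2.M.A.obj U ◁ A2.ι V X) ⊗≫ 𝟙 _ := by
    calc A1.ι (U ⊗ V) X ≫ A1.M2 U V ≫ (κ U ⊗ₘ κ V)
        = (𝟙 _ ⊗≫ (tensorObj (ld X) U ◁ ((η_ X (rd X) ≫ (X ◁ (P.p X).inv)) ▷
              tensorObj V X)) ⊗≫ (A1.ι U X ⊗ₘ A1.ι V X)) ≫
            MonoidalCategory.tensorHom (κ U) (κ V) := by
          rw [← Category.assoc, A1.M2_det U V X]
      _ = 𝟙 _ ⊗≫ (tensorObj (ld X) U ◁ ((η_ X (rd X) ≫ (X ◁ (P.p X).inv)) ▷ tensorObj V X)) ⊗≫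
            (((A1.ι U X ≫ κ U) ▷ tensorObj (ld X) (tensorObj V X)) ≫
              (A2.M.A.obj U ◁ (A1.ι V X ≫ κ V))) ⊗≫ 𝟙 _ := by
          simp only [monoidalComp, Category.assoc]
          rw [MonoidalCategory.tensorHom_comp_tensorHom, MonoidalCategory.tensorHom_def]
          monoidal
      _ = 𝟙 _ ⊗≫ (tensorObj (ld X) U ◁ ((η_ X (rd X) ≫ (X ◁ (P.p X).inv)) ▷ tensorObj V X)) ⊗≫
            ((((P.p X).hom ▷ (U ⊗ X)) ≫ A2.ι U X) ▷ tensorObj (ld X) (tensorObj V X)) ⊗≫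
            (A2.M.A.obj U ◁ (((P.p X).hom ▷ (V ⊗ X)) ≫ A2.ι V X)) ⊗≫ 𝟙 _ := by
          rw [hκ U X, hκ V X]; monoidal
      _ = 𝟙 _ ⊗≫ (tensorObj (ld X) U ◁ ((η_ X (rd X) ≫ (X ◁ (P.p X).inv)) ▷ tensorObj V X)) ⊗≫
            (((P.p X).hom ▷ tensorObj U X) ▷ tensorObj (ld X) (tensorObj V X)) ⊗≫
            ((A2.ι U X ▷ tensorObj (ld X) (tensorObj V X)) ≫
              (A2.M.A.obj U ◁ ((P.p X).hom ▷ tensorObj V X))) ⊗≫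
            (A2.M.A.obj U ◁ A2.ι V X) ⊗≫ 𝟙 _ := by
          monoidal
      _ = 𝟙 _ ⊗≫ (tensorObj (ld X) U ◁ ((η_ X (rd X) ≫ (X ◁ (P.p X).inv)) ▷ tensorObj V X)) ⊗≫
            (((P.p X).hom ▷ tensorObj U X) ▷ tensorObj (ld X) (tensorObj V X)) ⊗≫
            ((tensorObj (rd X) (tensorObj U X) ◁ ((P.p X).hom ▷ tensorObj V X)) ≫
              (A2.ι U X ▷ tensorObj (rd X) (tensorObj V X))) ⊗≫
            (A2.M.A.obj U ◁ A2.ι V X) ⊗≫ 𝟙 _ := by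
          rw [← whisker_exchange]
      _ = 𝟙 _ ⊗≫ (tensorObj (ld X) U ◁ ((η_ X (rd X) ≫ (X ◁ (P.p X).inv)) ▷ tensorObj V X)) ⊗≫
            ((((P.p X).hom ▷ tensorObj U X) ▷ tensorObj (ld X) (tensorObj V X)) ≫
              (tensorObj (rd X) (tensorObj U X) ◁ ((P.p X).hom ▷ tensorObj V X))) ⊗≫
            (A2.ι U X ▷ tensorObj (rd X) (tensorObj V X)) ⊗≫
            (A2.M.A.obj U ◁ A2.ι V X) ⊗≫ 𝟙 _ := by
          monoidal
      _ = 𝟙 _ ⊗≫ (tensorObj (ld X) U ◁ ((η_ X (rd X) ≫ (X ◁ (P.p X).inv)) ▷ tensorObj V X)) ⊗≫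
            ((tensorObj (ld X) (tensorObj U X) ◁ ((P.p X).hom ▷ tensorObj V X)) ≫
              (((P.p X).hom ▷ tensorObj U X) ▷ tensorObj (rd X) (tensorObj V X))) ⊗≫
            (A2.ι U X ▷ tensorObj (rd X) (tensorObj V X)) ⊗≫
            (A2.M.A.obj U ◁ A2.ι V X) ⊗≫ 𝟙 _ := by
          rw [← whisker_exchange]
      _ = 𝟙 _ ⊗≫ (tensorObj (ld X) U ◁
              ((η_ X (rd X) ≫ (X ◁ ((P.p X).inv ≫ (P.p X).hom))) ▷ tensorObj V X)) ⊗≫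
            (((P.p X).hom ▷ tensorObj U X) ▷ tensorObj (rd X) (tensorObj V X)) ⊗≫
            (A2.ι U X ▷ tensorObj (rd X) (tensorObj V X)) ⊗≫
            (A2.M.A.obj U ◁ A2.ι V X) ⊗≫ 𝟙 _ := by
          monoidal
      _ = 𝟙 _ ⊗≫ (tensorObj (ld X) U ◁ (η_ X (rd X) ▷ tensorObj V X)) ⊗≫
            (((P.p X).hom ▷ tensorObj U X) ▷ tensorObj (rd X) (tensorObj V X)) ⊗≫
            (A2.ι U X ▷ tensorObj (rd X) (tensorObj V X)) ⊗≫
            (A2.M.A.obj U ◁ A2.ι V X) ⊗≫ 𝟙 _ := by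
          rw [Iso.inv_hom_id]; monoidal
      _ = 𝟙 _ ⊗≫ ((ld X ◁ (𝟙 ((U ⊗ V) ⊗ X) ⊗≫ (U ◁ (η_ X (rd X) ▷ tensorObj V X)) ⊗≫
              𝟙 (tensorObj (tensorObj U X) (tensorObj (rd X) (tensorObj V X))))) ≫
              ((P.p X).hom ▷ tensorObj (tensorObj U X) (tensorObj (rd X) (tensorObj V X)))) ⊗≫
            (A2.ι U X ▷ tensorObj (rd X) (tensorObj V X)) ⊗≫
            (A2.M.A.obj U ◁ A2.ι V X) ⊗≫ 𝟙 _ := by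
          monoidal
      _ = 𝟙 _ ⊗≫ (((P.p X).hom ▷ ((U ⊗ V) ⊗ X)) ≫
              (rd X ◁ (𝟙 ((U ⊗ V) ⊗ X) ⊗≫ (U ◁ (η_ X (rd X) ▷ tensorObj V X)) ⊗≫
                𝟙 (tensorObj (tensorObj U X) (tensorObj (rd X) (tensorObj V X)))))) ⊗≫
            (A2.ι U X ▷ tensorObj (rd X) (tensorObj V X)) ⊗≫
            (A2.M.A.obj U ◁ A2.ι V X) ⊗≫ 𝟙 _ := by
          rw [whisker_exchange]
      _ = _ := by
          monoidal
  exact hL.trans hR.symm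



theorem k12_iso (V : C) : IsIso (κ V) := by
  have hdin : ∀ {X Y : C} (f : X ⟶ Y),
      (rightAdjointMate f ▷ (V ⊗ X)) ≫ (((P.p X).inv ▷ (V ⊗ X)) ≫ A1.ι V X)
        = (rd Y ◁ (V ◁ f)) ≫ (((P.p Y).inv ▷ (V ⊗ Y)) ≫ A1.ι V Y) := by
    intro X Y f
    calc (rightAdjointMate f ▷ (V ⊗ X)) ≫ (((P.p X).inv ▷ (V ⊗ X)) ≫ A1.ι V X)
        = ((ram f ≫ (P.p X).inv) ▷ (V ⊗ X)) ≫ A1.ι V X := by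
          rw [← comp_whiskerRight_assoc]
      _ = (((P.p Y).inv ≫ lam f) ▷ (V ⊗ X)) ≫ A1.ι V X := by rw [← pnat' P f]
      _ = ((P.p Y).inv ▷ (V ⊗ X)) ≫ (leftAdjointMate f ▷ (V ⊗ X)) ≫ A1.ι V X := by
          rw [comp_whiskerRight, Category.assoc]
      _ = ((P.p Y).inv ▷ (V ⊗ X)) ≫ (ld Y ◁ (V ◁ f)) ≫ A1.ι V Y := by
          rw [A1.dinat V f]
      _ = (rd Y ◁ (V ◁ f)) ≫ (((P.p Y).inv ▷ (V ⊗ Y)) ≫ A1.ι V Y) := by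
          rw [← whisker_exchange_assoc]
  obtain ⟨κ', hκ', -⟩ := A2.universal V (A1.M.A.obj V)
    (fun X => ((P.p X).inv ▷ (V ⊗ X)) ≫ A1.ι V X) hdin
  refine ⟨κ', ?_, ?_⟩
  · refine jepi_A1 A1 V _ _ fun X => ?_
    rw [Category.comp_id, ← Category.assoc, hκ, Category.assoc, hκ' X,
      ← Category.assoc, ← comp_whiskerRight, Iso.hom_inv_id, id_whiskerRight,
      Category.id_comp]
  · refine jepi_A2 A2 V _ _ fun X => ?_
    rw [Category.comp_id, ← Category.assoc, hκ' X, Category.assoc, hκ,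
      ← Category.assoc, ← comp_whiskerRight, Iso.inv_hom_id, id_whiskerRight,
      Category.id_comp]

end K12
section K34
open CategoryTheory MonoidalCategory
variable {C : Type} [Category C] [MonoidalCategory C] [RigidCategory C]
variable {P : PivotalData C} (A3 : CentralMonadA3 C) (A4 : CentralMonadA4 C P)
  (κ : ∀ V : C, A3.M.A.obj V ⟶ A4.M.A.obj V)
  (hκ : ∀ V X : C, A3.ι V X ≫ κ V = ((X ⊗ V) ◁ (P.p X).hom) ≫ A4.ι V X)

include hκ

theorem k34_nat {V W : C} (f : V ⟶ W) :
    A3.M.A.map f ≫ κ W = κ V ≫ A4.M.A.map f := by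
  refine jepi_A3 A3 V _ _ fun X => ?_
  calc A3.ι V X ≫ A3.M.A.map f ≫ κ W
      = ((X ◁ f) ▷ ld X) ≫ (A3.ι W X ≫ κ W) := by
        rw [← Category.assoc, ← A3.nat f X, Category.assoc]
    _ = ((X ◁ f) ▷ ld X) ≫ ((X ⊗ W) ◁ (P.p X).hom) ≫ A4.ι W X := by rw [hκ]
    _ = ((X ⊗ V) ◁ (P.p X).hom) ≫ ((X ◁ f) ▷ rd X) ≫ A4.ι W X := by
        rw [← whisker_exchange_assoc]
    _ = ((X ⊗ V) ◁ (P.p X).hom) ≫ A4.ι V X ≫ A4.M.A.map f := by rw [A4.nat f X]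
    _ = A3.ι V X ≫ κ V ≫ A4.M.A.map f := by rw [← Category.assoc, ← hκ, Category.assoc]

theorem k34_eta (V : C) : A3.M.η V ≫ κ V = A4.M.η V := by
  rw [A3.η_det, A4.η_det]
  simp only [Category.assoc, hκ]
  rw [← MonoidalCategory.whiskerLeft_comp_assoc, P.unit]

theorem k34_M0 : κ (𝟙_ C) ≫ A4.M0 = A3.M0 := by
  refine jepi_A3 A3 (𝟙_ C) _ _ fun X => ?_
  calc A3.ι (𝟙_ C) X ≫ κ (𝟙_ C) ≫ A4.M0
      = ((X ⊗ 𝟙_ C) ◁ (P.p X).hom) ≫ (A4.ι (𝟙_ C) X ≫ A4.M0) := by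
        rw [← Category.assoc, hκ, Category.assoc]
    _ = ((X ⊗ 𝟙_ C) ◁ (P.p X).hom) ≫ ((ρ_ X).hom ▷ rd X) ≫
          (X ◁ (P.p X).inv) ≫ ε_ (ld X) X := by
        rw [A4.M0_det]
    _ = ((ρ_ X).hom ▷ ld X) ≫ (X ◁ (P.p X).hom) ≫ (X ◁ (P.p X).inv) ≫ ε_ (ld X) X := by
        rw [whisker_exchange_assoc]
    _ = ((ρ_ X).hom ▷ ld X) ≫ ε_ (ld X) X := by
        rw [← MonoidalCategory.whiskerLeft_comp_assoc, Iso.hom_inv_id,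
          MonoidalCategory.whiskerLeft_id, Category.id_comp]
    _ = A3.ι (𝟙_ C) X ≫ A3.M0 := (A3.M0_det X).symm

theorem k34_mu (V : C) :
    A3.M.μ V ≫ κ V = A3.M.A.map (κ V) ≫ κ (A4.M.A.obj V) ≫ A4.M.μ V := by
  refine ext2_A3 A3 V fun X Y => ?_
  have hL : ((Y ◁ A3.ι V X) ▷ ld Y) ≫ A3.ι (A3.M.A.obj V) Y ≫ A3.M.μ V ≫ κ V
      = 𝟙 _ ⊗≫ (tensorObj (tensorObj Y X) V ◁
          (((P.p X).hom ⊗ₘ (P.p Y).hom) ≫ γmap X Y)) ≫ A4.ι V (Y ⊗ X) := by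
    calc ((Y ◁ A3.ι V X) ▷ ld Y) ≫ A3.ι (A3.M.A.obj V) Y ≫ A3.M.μ V ≫ κ V
        = (((Y ◁ A3.ι V X) ▷ ld Y) ≫ A3.ι (A3.M.A.obj V) Y ≫ A3.M.μ V) ≫ κ V := by
          simp only [Category.assoc]
      _ = (𝟙 _ ⊗≫ (tensorObj (tensorObj Y X) V ◁ γmapL X Y) ≫ A3.ι V (Y ⊗ X)) ≫ κ V := by
          rw [A3.μ_det V X Y]
      _ = 𝟙 _ ⊗≫ (tensorObj (tensorObj Y X) V ◁ γmapL X Y) ≫ (A3.ι V (Y ⊗ X) ≫ κ V) := by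
          simp only [monoidalComp, Category.assoc]
      _ = 𝟙 _ ⊗≫ (tensorObj (tensorObj Y X) V ◁ (γmapL X Y ≫ (P.p (Y ⊗ X)).hom)) ≫
          A4.ι V (Y ⊗ X) := by
          rw [hκ]; monoidal
      _ = 𝟙 _ ⊗≫ (tensorObj (tensorObj Y X) V ◁
          (((P.p X).hom ⊗ₘ (P.p Y).hom) ≫ γmap X Y)) ≫ A4.ι V (Y ⊗ X) := by
          rw [← P.monoidal X Y]
  have hR : ((Y ◁ A3.ι V X) ▷ ld Y) ≫ A3.ι (A3.M.A.obj V) Y ≫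
        A3.M.A.map (κ V) ≫ κ (A4.M.A.obj V) ≫ A4.M.μ V
      = 𝟙 _ ⊗≫ (tensorObj (tensorObj Y X) V ◁
          (((P.p X).hom ⊗ₘ (P.p Y).hom) ≫ γmap X Y)) ≫ A4.ι V (Y ⊗ X) := by
    calc ((Y ◁ A3.ι V X) ▷ ld Y) ≫ A3.ι (A3.M.A.obj V) Y ≫
          A3.M.A.map (κ V) ≫ κ (A4.M.A.obj V) ≫ A4.M.μ V
        = ((Y ◁ (A3.ι V X ≫ κ V)) ▷ ld Y) ≫
            (A3.ι (A4.M.A.obj V) Y ≫ κ (A4.M.A.obj V)) ≫ A4.M.μ V := by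
          slice_lhs 2 3 => rw [← A3.nat (κ V) Y]
          slice_lhs 1 2 => rw [← comp_whiskerRight, ← MonoidalCategory.whiskerLeft_comp]
          simp only [Category.assoc]
      _ = ((Y ◁ (((X ⊗ V) ◁ (P.p X).hom) ≫ A4.ι V X)) ▷ ld Y) ≫
            (((Y ⊗ A4.M.A.obj V) ◁ (P.p Y).hom) ≫ A4.ι (A4.M.A.obj V) Y) ≫ A4.M.μ V := by
          rw [hκ V X, hκ (A4.M.A.obj V) Y]
      _ = 𝟙 _ ⊗≫ (((Y ◁ ((tensorObj X V ◁ (P.p X).hom) ≫ A4.ι V X)) ▷ ld Y) ≫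
            (tensorObj Y (A4.M.A.obj V) ◁ (P.p Y).hom)) ⊗≫
            (A4.ι (A4.M.A.obj V) Y ≫ A4.M.μ V) ⊗≫ 𝟙 _ := by
          monoidal
      _ = 𝟙 _ ⊗≫ ((tensorObj Y (tensorObj (tensorObj X V) (ld X)) ◁ (P.p Y).hom) ≫
            ((Y ◁ ((tensorObj X V ◁ (P.p X).hom) ≫ A4.ι V X)) ▷ rd Y)) ⊗≫
            (A4.ι (A4.M.A.obj V) Y ≫ A4.M.μ V) ⊗≫ 𝟙 _ := by
          rw [← whisker_exchange]
      _ = 𝟙 _ ⊗≫ (tensorObj Y (tensorObj (tensorObj X V) (ld X)) ◁ (P.p Y).hom) ⊗≫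
            ((Y ◁ (tensorObj X V ◁ (P.p X).hom)) ▷ rd Y) ⊗≫
            (((Y ◁ A4.ι V X) ▷ rd Y) ≫ A4.ι (A4.M.A.obj V) Y ≫ A4.M.μ V) ⊗≫ 𝟙 _ := by
          monoidal
      _ = 𝟙 _ ⊗≫ (tensorObj Y (tensorObj (tensorObj X V) (ld X)) ◁ (P.p Y).hom) ⊗≫
            ((Y ◁ (tensorObj X V ◁ (P.p X).hom)) ▷ rd Y) ⊗≫
            (𝟙 _ ⊗≫ (((Y ⊗ X) ⊗ V) ◁ γmap X Y) ≫ A4.ι V (Y ⊗ X)) ⊗≫ 𝟙 _ := by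
          rw [A4.μ_det V X Y]
      _ = 𝟙 _ ⊗≫ (tensorObj (tensorObj Y X) V ◁
          (((P.p X).hom ⊗ₘ (P.p Y).hom) ≫ γmap X Y)) ≫ A4.ι V (Y ⊗ X) := by
          rw [tensorHom_def']; monoidal
  exact hL.trans hR.symm

theorem k34_M2 (U V : C) : κ (U ⊗ V) ≫ A4.M2 U V = A3.M2 U V ≫ (κ U ⊗ₘ κ V) := by
  refine jepi_A3 A3 (U ⊗ V) _ _ fun X => ?_
  have hL : A3.ι (U ⊗ V) X ≫ κ (U ⊗ V) ≫ A4.M2 U V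
      = 𝟙 _ ⊗≫ (tensorObj X U ◁ (η_ (ld X) X ▷ tensorObj V (ld X))) ⊗≫
          (((((X ⊗ U) ◁ (P.p X).hom) ≫ A4.ι U X) ▷
              tensorObj (tensorObj X V) (ld X)) ≫
            (A4.M.A.obj U ◁ (((X ⊗ V) ◁ (P.p X).hom) ≫ A4.ι V X))) ⊗≫ 𝟙 _ := by
    calc A3.ι (U ⊗ V) X ≫ κ (U ⊗ V) ≫ A4.M2 U V
        = ((X ⊗ (U ⊗ V)) ◁ (P.p X).hom) ≫ (A4.ι (U ⊗ V) X ≫ A4.M2 U V) := by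
          rw [← Category.assoc, hκ, Category.assoc]
      _ = ((X ⊗ (U ⊗ V)) ◁ (P.p X).hom) ≫
            (𝟙 _ ⊗≫ ((X ⊗ U) ◁ ((η_ (ld X) X ≫ ((P.p X).hom ▷ X)) ▷ (V ⊗ rd X))) ⊗≫
              (A4.ι U X ⊗ₘ A4.ι V X)) := by
          rw [A4.M2_det U V X]
      _ = 𝟙 _ ⊗≫ ((tensorObj X (tensorObj U V) ◁ (P.p X).hom) ≫
            ((𝟙 (tensorObj X (tensorObj U V)) ⊗≫
                (tensorObj X U ◁ ((η_ (ld X) X ≫ ((P.p X).hom ▷ X)) ▷ V)) ⊗≫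
                𝟙 (tensorObj (tensorObj (tensorObj X U) (rd X)) (tensorObj X V))) ▷
              rd X)) ⊗≫
            (A4.ι U X ▷ tensorObj (tensorObj X V) (rd X)) ⊗≫
            (A4.M.A.obj U ◁ A4.ι V X) ⊗≫ 𝟙 _ := by
          rw [MonoidalCategory.tensorHom_def]; monoidal
      _ = 𝟙 _ ⊗≫ (((𝟙 (tensorObj X (tensorObj U V)) ⊗≫
                (tensorObj X U ◁ ((η_ (ld X) X ≫ ((P.p X).hom ▷ X)) ▷ V)) ⊗≫
                𝟙 (tensorObj (tensorObj (tensorObj X U) (rd X)) (tensorObj X V))) ▷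
              ld X) ≫
            (tensorObj (tensorObj (tensorObj X U) (rd X)) (tensorObj X V) ◁
              (P.p X).hom)) ⊗≫
            (A4.ι U X ▷ tensorObj (tensorObj X V) (rd X)) ⊗≫
            (A4.M.A.obj U ◁ A4.ι V X) ⊗≫ 𝟙 _ := by
          rw [whisker_exchange]
      _ = 𝟙 _ ⊗≫ ((𝟙 (tensorObj X (tensorObj U V)) ⊗≫
              (tensorObj X U ◁ ((η_ (ld X) X ≫ ((P.p X).hom ▷ X)) ▷ V)) ⊗≫
              𝟙 (tensorObj (tensorObj (tensorObj X U) (rd X)) (tensorObj X V))) ▷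
            ld X) ⊗≫
            ((tensorObj (tensorObj (tensorObj X U) (rd X)) (tensorObj X V) ◁
                (P.p X).hom) ≫
              ((A4.ι U X ▷ tensorObj X V) ▷ rd X)) ⊗≫
            (A4.M.A.obj U ◁ A4.ι V X) ⊗≫ 𝟙 _ := by
          monoidal
      _ = 𝟙 _ ⊗≫ ((𝟙 (tensorObj X (tensorObj U V)) ⊗≫
              (tensorObj X U ◁ ((η_ (ld X) X ≫ ((P.p X).hom ▷ X)) ▷ V)) ⊗≫
              𝟙 (tensorObj (tensorObj (tensorObj X U) (rd X)) (tensorObj X V))) ▷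
            ld X) ⊗≫
            (((A4.ι U X ▷ tensorObj X V) ▷ ld X) ≫
              (tensorObj (A4.M.A.obj U) (tensorObj X V) ◁ (P.p X).hom)) ⊗≫
            (A4.M.A.obj U ◁ A4.ι V X) ⊗≫ 𝟙 _ := by
          rw [whisker_exchange]
      _ = _ := by
          monoidal
  have hR : A3.ι (U ⊗ V) X ≫ A3.M2 U V ≫ (κ U ⊗ₘ κ V)
      = 𝟙 _ ⊗≫ (tensorObj X U ◁ (η_ (ld X) X ▷ tensorObj V (ld X))) ⊗≫
          (((((X ⊗ U) ◁ (P.p X).hom) ≫ A4.ι U X) ▷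
              tensorObj (tensorObj X V) (ld X)) ≫
            (A4.M.A.obj U ◁ (((X ⊗ V) ◁ (P.p X).hom) ≫ A4.ι V X))) ⊗≫ 𝟙 _ := by
    calc A3.ι (U ⊗ V) X ≫ A3.M2 U V ≫ (κ U ⊗ₘ κ V)
        = (𝟙 _ ⊗≫ (tensorObj X U ◁ (η_ (ld X) X ▷ tensorObj V (ld X))) ⊗≫
            (A3.ι U X ⊗ₘ A3.ι V X)) ≫ MonoidalCategory.tensorHom (κ U) (κ V) := by
          rw [← Category.assoc, A3.M2_det U V X]
      _ = 𝟙 _ ⊗≫ (tensorObj X U ◁ (η_ (ld X) X ▷ tensorObj V (ld X))) ⊗≫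
            (((A3.ι U X ≫ κ U) ▷ tensorObj (tensorObj X V) (ld X)) ≫
              (A4.M.A.obj U ◁ (A3.ι V X ≫ κ V))) ⊗≫ 𝟙 _ := by
          simp only [monoidalComp, Category.assoc]
          rw [MonoidalCategory.tensorHom_comp_tensorHom, MonoidalCategory.tensorHom_def]
          monoidal
      _ = _ := by
          rw [hκ U X, hκ V X]
  exact hL.trans hR.symm

theorem k34_iso (V : C) : IsIso (κ V) := by
  have hdin : ∀ {X Y : C} (f : X ⟶ Y),
      ((f ▷ V) ▷ rd Y) ≫ (((Y ⊗ V) ◁ (P.p Y).inv) ≫ A3.ι V Y)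
        = ((X ⊗ V) ◁ rightAdjointMate f) ≫ (((X ⊗ V) ◁ (P.p X).inv) ≫ A3.ι V X) := by
    intro X Y f
    calc ((f ▷ V) ▷ rd Y) ≫ (((Y ⊗ V) ◁ (P.p Y).inv) ≫ A3.ι V Y)
        = ((X ⊗ V) ◁ (P.p Y).inv) ≫ ((f ▷ V) ▷ ld Y) ≫ A3.ι V Y := by
          rw [whisker_exchange_assoc]
      _ = ((X ⊗ V) ◁ (P.p Y).inv) ≫ ((X ⊗ V) ◁ leftAdjointMate f) ≫ A3.ι V X := by
          rw [A3.dinat V f]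
      _ = ((X ⊗ V) ◁ ((P.p Y).inv ≫ lam f)) ≫ A3.ι V X := by
          rw [← MonoidalCategory.whiskerLeft_comp_assoc]
      _ = ((X ⊗ V) ◁ (ram f ≫ (P.p X).inv)) ≫ A3.ι V X := by rw [pnat' P f]
      _ = ((X ⊗ V) ◁ rightAdjointMate f) ≫ (((X ⊗ V) ◁ (P.p X).inv) ≫ A3.ι V X) := by
          rw [MonoidalCategory.whiskerLeft_comp, Category.assoc]
  obtain ⟨κ', hκ', -⟩ := A4.universal V (A3.M.A.obj V)
    (fun X => ((X ⊗ V) ◁ (P.p X).inv) ≫ A3.ι V X) hdin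
  refine ⟨κ', ?_, ?_⟩
  · refine jepi_A3 A3 V _ _ fun X => ?_
    rw [Category.comp_id, ← Category.assoc, hκ, Category.assoc, hκ' X,
      ← Category.assoc, ← MonoidalCategory.whiskerLeft_comp, Iso.hom_inv_id,
      MonoidalCategory.whiskerLeft_id, Category.id_comp]
  · refine jepi_A4 A4 V _ _ fun X => ?_
    rw [Category.comp_id, ← Category.assoc, hκ' X, Category.assoc, hκ,
      ← Category.assoc, ← MonoidalCategory.whiskerLeft_comp, Iso.inv_hom_id,
      MonoidalCategory.whiskerLeft_id, Category.id_comp]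

end K34
theorem stmt_1
    (k : Type) [Field k] [IsAlgClosed k]
    (C : Type) [Category C] [Abelian C] [CategoryTheory.Linear k C]
    [MonoidalCategory C] [MonoidalPreadditive C] [CategoryTheory.MonoidalLinear k C]
    [RigidCategory C] [EnoughProjectives C]
    [∀ X Y : C, FiniteDimensional k (X ⟶ Y)]
    [Simple (𝟙_ C)]
    (hlength : ∀ X : C, WellFoundedLT (Subobject X) ∧ WellFoundedGT (Subobject X))
    (hsimples : ∃ (ι : Type) (_ : Finite ι) (S : ι → C),
      ∀ X : C, Simple X → ∃ i : ι, Nonempty (X ≅ S i))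
    (A2 : CentralMonadA2 C) (A3 : CentralMonadA3 C) :
    -- κ₂₃ is an isomorphism of Hopf monads:
    (∀ κ : ∀ V : C, A2.M.A.obj V ⟶ A3.M.A.obj V,
      (∀ V X : C,
        A2.ι V X ≫ κ V
          = 𝟙 (rd X ⊗ (V ⊗ X)) ⊗≫ ((rd X ⊗ V) ◁ ωinv X) ≫ A3.ι V (rd X)) →
      IsHopfMonadIso A2.M A3.M A2.M2 A2.M0 A3.M2 A3.M0 κ)
    ∧
    -- and in the pivotal case κ₁₂ and κ₃₄ are isomorphisms of Hopf monads:
    (∀ (P : PivotalData C) (A1 : CentralMonadA1 C P) (A4 : CentralMonadA4 C P),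
      (∀ κ : ∀ V : C, A1.M.A.obj V ⟶ A2.M.A.obj V,
        (∀ V X : C, A1.ι V X ≫ κ V = ((P.p X).hom ▷ (V ⊗ X)) ≫ A2.ι V X) →
        IsHopfMonadIso A1.M A2.M A1.M2 A1.M0 A2.M2 A2.M0 κ)
      ∧
      (∀ κ : ∀ V : C, A3.M.A.obj V ⟶ A4.M.A.obj V,
        (∀ V X : C, A3.ι V X ≫ κ V = ((X ⊗ V) ◁ (P.p X).hom) ≫ A4.ι V X) →
        IsHopfMonadIso A3.M A4.M A3.M2 A3.M0 A4.M2 A4.M0 κ)) := by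

  constructor
  · intro κ hκ
    exact ⟨fun V => k23_iso A2 A3 κ hκ V,
      fun {V W} f => k23_nat A2 A3 κ hκ f,
      fun V => k23_mu A2 A3 κ hκ V,
      fun V => k23_eta A2 A3 κ hκ V,
      fun X Y => k23_M2 A2 A3 κ hκ X Y,
      k23_M0 A2 A3 κ hκ⟩
  · intro P A1 A4
    constructor
    · intro κ hκ
      exact ⟨fun V => k12_iso A1 A2 κ hκ V,
        fun {V W} f => k12_nat A1 A2 κ hκ f,
        fun V => k12_mu A1 A2 κ hκ V,
        fun V => k12_eta A1 A2 κ hκ V,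
        fun X Y => k12_M2 A1 A2 κ hκ X Y,
        k12_M0 A1 A2 κ hκ⟩
    · intro κ hκ
      exact ⟨fun V => k34_iso A3 A4 κ hκ V,
        fun {V W} f => k34_nat A3 A4 κ hκ f,
        fun V => k34_mu A3 A4 κ hκ V,
        fun V => k34_eta A3 A4 κ hκ V,
        fun X Y => k34_M2 A3 A4 κ hκ X Y,
        k34_M0 A3 A4 κ hκ⟩
end

section
/- Let C be a finite tensor category with distinguished invertible object D, and let R: A₂ ⇒ Z₄A₂ be the categorical coaction with components R_U = Z₄(μ_U)∘η̃_{A₂(U)}. Then a morphism λ: 1 → A₂(D) in C is a right monadic cointegral if and only if R_D∘λ = Z₄(λ)∘u₄, where u₄: 1 → Z₄(1) is the unit of the Hopf comonad Z₄. -/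
open CategoryTheory MonoidalCategory

set_option maxHeartbeats 1000000

-- ZBASE layer
open CategoryTheory MonoidalCategory

noncomputable section ZBase

variable {C : Type} [Category C] [MonoidalCategory C] [RigidCategory C]

/-- the canonical isomorphism `∨𝟙 ⟶ 𝟙`. -/
def uDualInv (C : Type) [Category C] [MonoidalCategory C] [RigidCategory C] :
    rd (𝟙_ C) ⟶ 𝟙_ C :=
  (ρ_ (rd (𝟙_ C))).inv ≫ ε_ (𝟙_ C) (rd (𝟙_ C))

/-- the canonical isomorphism `∨(Y ⊗ X) ⟶ ∨X ⊗ ∨Y` (inverse of `γmap X Y`). -/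
def γmapInv (X Y : C) : rd (Y ⊗ X) ⟶ rd X ⊗ rd Y :=
  (ρ_ (rd (Y ⊗ X))).inv ≫ (rd (Y ⊗ X) ◁ η_ Y (rd Y)) ⊗≫
    (rd (Y ⊗ X) ◁ (Y ◁ (η_ X (rd X) ▷ rd Y))) ⊗≫
    (ε_ (Y ⊗ X) (rd (Y ⊗ X)) ▷ (rd X ⊗ rd Y)) ⊗≫ 𝟙 (rd X ⊗ rd Y)

/-- the central Hopf comonad `Z₄(V) = ∫_X X ⊗ (V ⊗ ∨X)` with its canonical comonad
structure and lax monoidal unit. -/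
structure CentralComonadZ4 (C : Type) [Category C] [MonoidalCategory C]
    [RigidCategory C] where
  Z : C ⥤ C
  π : ∀ V X : C, Z.obj V ⟶ X ⊗ (V ⊗ rd X)
  dinat : ∀ (V : C) {X Y : C} (f : X ⟶ Y),
    π V X ≫ (f ▷ (V ⊗ rd X)) = π V Y ≫ (Y ◁ (V ◁ rightAdjointMate f))
  nat : ∀ {V W : C} (g : V ⟶ W) (X : C),
    π V X ≫ (X ◁ (g ▷ rd X)) = Z.map g ≫ π W X
  universal : ∀ (V W : C) (g : ∀ X : C, W ⟶ X ⊗ (V ⊗ rd X)),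
    (∀ {X Y : C} (f : X ⟶ Y),
      g X ≫ (f ▷ (V ⊗ rd X)) = g Y ≫ (Y ◁ (V ◁ rightAdjointMate f))) →
    ∃! h : W ⟶ Z.obj V, ∀ X : C, h ≫ π V X = g X
  /-- comonad comultiplication -/
  δ : ∀ V : C, Z.obj V ⟶ Z.obj (Z.obj V)
  /-- comonad counit -/
  εZ : ∀ V : C, Z.obj V ⟶ V
  δ_nat : ∀ {V W : C} (f : V ⟶ W), Z.map f ≫ δ W = δ V ≫ Z.map (Z.map f)
  εZ_nat : ∀ {V W : C} (f : V ⟶ W), Z.map f ≫ εZ W = εZ V ≫ f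
  coassoc : ∀ V : C, δ V ≫ Z.map (δ V) = δ V ≫ δ (Z.obj V)
  counit_l : ∀ V : C, δ V ≫ εZ (Z.obj V) = 𝟙 _
  counit_r : ∀ V : C, δ V ≫ Z.map (εZ V) = 𝟙 _
  δ_det : ∀ V X Y : C,
    δ V ≫ π (Z.obj V) Y ≫ (Y ◁ (π V X ▷ rd Y))
      = π V (Y ⊗ X) ≫ ((Y ⊗ X) ◁ (V ◁ γmapInv X Y)) ⊗≫
          𝟙 (Y ⊗ ((X ⊗ (V ⊗ rd X)) ⊗ rd Y))
  εZ_det : ∀ V : C,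
    εZ V = π V (𝟙_ C) ≫ (λ_ (V ⊗ rd (𝟙_ C))).hom ≫ (V ◁ uDualInv C) ≫ (ρ_ V).hom
  /-- the unit of the lax monoidal structure of `Z₄` -/
  u : 𝟙_ C ⟶ Z.obj (𝟙_ C)
  u_det : ∀ X : C, u ≫ π (𝟙_ C) X = η_ X (rd X) ≫ (X ◁ (λ_ (rd X)).inv)

/-- the adjunction `A₂ ⊣ Z₄` of the paper, with its canonical counit. -/
structure AdjunctionData (A2 : CentralMonadA2 C) (Z4 : CentralComonadZ4 C) where
  /-- the unit `η̃ : Id ⇒ Z₄A₂` -/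
  unit : ∀ V : C, V ⟶ Z4.Z.obj (A2.M.A.obj V)
  /-- the counit `ε̃ : A₂Z₄ ⇒ Id` -/
  counit : ∀ V : C, A2.M.A.obj (Z4.Z.obj V) ⟶ V
  unit_nat : ∀ {V W : C} (f : V ⟶ W),
    f ≫ unit W = unit V ≫ Z4.Z.map (A2.M.A.map f)
  counit_nat : ∀ {V W : C} (f : V ⟶ W),
    A2.M.A.map (Z4.Z.map f) ≫ counit W = counit V ≫ f
  tri₁ : ∀ V : C, A2.M.A.map (unit V) ≫ counit (A2.M.A.obj V) = 𝟙 _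
  tri₂ : ∀ V : C, unit (Z4.Z.obj V) ≫ Z4.Z.map (counit V) = 𝟙 _
  counit_det : ∀ V X : C,
    A2.ι (Z4.Z.obj V) X ≫ counit V
      = (rd X ◁ (Z4.π V X ▷ X)) ⊗≫ (ε_ X (rd X) ▷ (V ⊗ (rd X ⊗ X))) ⊗≫
          (V ◁ ε_ X (rd X)) ⊗≫ 𝟙 V

end ZBase


section AuxProof

open CategoryTheory MonoidalCategory

variable {C : Type} [Category C] [MonoidalCategory C] [RigidCategory C]

/-- key: the transpose of the unit of `Z₄` under the adjunction is `M0`. -/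
lemma aux_M0_eq (A2 : CentralMonadA2 C) (Z4 : CentralComonadZ4 C)
    (adj : AdjunctionData A2 Z4) :
    A2.M.A.map Z4.u ≫ adj.counit (𝟙_ C) = A2.M0 := by
  obtain ⟨h, hh, huniq⟩ := A2.universal (𝟙_ C) (𝟙_ C)
    (fun X => (rd X ◁ (λ_ X).hom) ≫ ε_ X (rd X))
    (by
      intro X Y f
      try dsimp only
      rw [← A2.M0_det, ← A2.M0_det, ← Category.assoc, ← Category.assoc,
        A2.dinat (𝟙_ C) f])
  have h1 : ∀ X : C, A2.ι (𝟙_ C) X ≫ (A2.M.A.map Z4.u ≫ adj.counit (𝟙_ C))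
      = (rd X ◁ (λ_ X).hom) ≫ ε_ X (rd X) := by
    intro X
    rw [← Category.assoc, ← A2.nat Z4.u X, Category.assoc, adj.counit_det]
    have hz : (rd X ◁ η_ X (rd X)) ≫ (α_ _ _ _).inv ≫ (ε_ X (rd X) ▷ rd X)
        = (ρ_ (rd X)).hom ≫ (λ_ (rd X)).inv :=
      ExactPairing.coevaluation_evaluation X (rd X)
    simp only [monoidalComp, Category.assoc]
    rw [← MonoidalCategory.whiskerLeft_comp_assoc, ← comp_whiskerRight, Z4.u_det]
    calc _ = (α_ (rd X) (𝟙_ C) X).inv ≫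
          ((((rd X ◁ η_ X (rd X)) ≫ (α_ _ _ _).inv ≫ (ε_ X (rd X) ▷ rd X))) ▷ X) ≫
          ((λ_ (rd X)).hom ▷ X) ≫ ε_ X (rd X) := by monoidal
      _ = (rd X ◁ (λ_ X).hom) ≫ ε_ X (rd X) := by rw [hz]; monoidal
  rw [huniq _ h1, huniq _ (fun X => A2.M0_det X)]

/-- key: `η̃₁ ≫ Z₄(M0) = u₄`. -/
lemma aux_unit_M0 (A2 : CentralMonadA2 C) (Z4 : CentralComonadZ4 C)
    (adj : AdjunctionData A2 Z4) :
    adj.unit (𝟙_ C) ≫ Z4.Z.map A2.M0 = Z4.u := by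
  rw [← aux_M0_eq A2 Z4 adj, Z4.Z.map_comp, ← Category.assoc, ← adj.unit_nat Z4.u,
    Category.assoc, adj.tri₂, Category.comp_id]

end AuxProof

/-!
STATEMENT 6.
Let `C` be a finite tensor category with distinguished invertible object `D`, and let
`R : A₂ ⇒ Z₄A₂` be the categorical coaction with components
`R_U = Z₄(μ_U) ∘ η̃_{A₂(U)}`.  Then a morphism `λ : 1 → A₂(D)` in `C` is a right
monadic cointegral if and only if `R_D ∘ λ = Z₄(λ) ∘ u₄`, where `u₄ : 1 → Z₄(1)` is
the unit of the Hopf comonad `Z₄`.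
-/

open CategoryTheory MonoidalCategory

theorem stmt_6
    (k : Type) [Field k] [IsAlgClosed k]
    (C : Type) [Category C] [Abelian C] [CategoryTheory.Linear k C]
    [MonoidalCategory C] [MonoidalPreadditive C] [CategoryTheory.MonoidalLinear k C]
    [RigidCategory C] [EnoughProjectives C]
    [∀ X Y : C, FiniteDimensional k (X ⟶ Y)]
    [Simple (𝟙_ C)]
    (hlength : ∀ X : C, WellFoundedLT (Subobject X) ∧ WellFoundedGT (Subobject X))
    (hsimples : ∃ (ι : Type) (_ : Finite ι) (S : ι → C),
      ∀ X : C, Simple X → ∃ i : ι, Nonempty (X ≅ S i))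
    -- `P` is the projective cover of the unit and `D` its socle
    (P : C) (hP : Projective P) (π : P ⟶ 𝟙_ C) (hπ : Epi π)
    (hess : ∀ (Y : C) (j : Y ⟶ P), Mono j → Epi (j ≫ π) → IsIso j)
    (D : C) (iD : D ⟶ P) (hiD : Mono iD) (hD_ne : ¬ Limits.IsZero D)
    (hD_min : ∀ (Y : C) (j : Y ⟶ P), Mono j → ¬ Limits.IsZero Y →
      ∃ m : D ⟶ Y, m ≫ j = iD)
    -- the central Hopf monad, central Hopf comonad, and the adjunction `A₂ ⊣ Z₄`
    (A2 : CentralMonadA2 C) (Z4 : CentralComonadZ4 C) (adj : AdjunctionData A2 Z4)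
    (lam : 𝟙_ C ⟶ A2.M.A.obj D) :
    -- `λ` is a right monadic cointegral iff `R_D ∘ λ = Z₄(λ) ∘ u₄`
    (A2.M.A.map lam ≫ A2.M.μ D = A2.M0 ≫ lam)
      ↔ lam ≫ (adj.unit (A2.M.A.obj D) ≫ Z4.Z.map (A2.M.μ D)) = Z4.u ≫ Z4.Z.map lam := by
  constructor
  · intro E
    calc lam ≫ (adj.unit (A2.M.A.obj D) ≫ Z4.Z.map (A2.M.μ D))
        = (lam ≫ adj.unit (A2.M.A.obj D)) ≫ Z4.Z.map (A2.M.μ D) := by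
          rw [Category.assoc]
      _ = adj.unit (𝟙_ C) ≫ Z4.Z.map (A2.M.A.map lam) ≫ Z4.Z.map (A2.M.μ D) := by
          rw [adj.unit_nat lam, Category.assoc]
      _ = adj.unit (𝟙_ C) ≫ Z4.Z.map (A2.M.A.map lam ≫ A2.M.μ D) := by
          rw [Z4.Z.map_comp]
      _ = adj.unit (𝟙_ C) ≫ Z4.Z.map (A2.M0 ≫ lam) := by rw [E]
      _ = (adj.unit (𝟙_ C) ≫ Z4.Z.map A2.M0) ≫ Z4.Z.map lam := by
          rw [Z4.Z.map_comp, Category.assoc]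
      _ = Z4.u ≫ Z4.Z.map lam := by rw [aux_unit_M0 A2 Z4 adj]
  · intro E
    have t : A2.M.A.map (lam ≫ (adj.unit (A2.M.A.obj D) ≫ Z4.Z.map (A2.M.μ D)))
          ≫ adj.counit (A2.M.A.obj D)
        = A2.M.A.map (Z4.u ≫ Z4.Z.map lam) ≫ adj.counit (A2.M.A.obj D) := by rw [E]
    have tl : A2.M.A.map (lam ≫ (adj.unit (A2.M.A.obj D) ≫ Z4.Z.map (A2.M.μ D)))
          ≫ adj.counit (A2.M.A.obj D) = A2.M.A.map lam ≫ A2.M.μ D := by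
      rw [A2.M.A.map_comp, A2.M.A.map_comp, Category.assoc, Category.assoc,
        adj.counit_nat (A2.M.μ D), ← Category.assoc (A2.M.A.map (adj.unit _)),
        adj.tri₁, Category.id_comp]
    have tr : A2.M.A.map (Z4.u ≫ Z4.Z.map lam) ≫ adj.counit (A2.M.A.obj D)
        = A2.M0 ≫ lam := by
      rw [A2.M.A.map_comp, Category.assoc, adj.counit_nat lam, ← Category.assoc,
        aux_M0_eq A2 Z4 adj]
    rw [← tl, t, tr]
end

section
/- Let H be a finite-dimensional Hopf algebra over an algebraically closed field k with modulus γ, and let λ∈H* be a right cointegral, i.e. (λ⊗id)(Δ(h)) = λ(h)·1 for all h∈H. Then for all a,h∈H one has γ⁻¹(h_(2)) · λ( S(h_(1)) · a · h_(3) ) = ε(h) · λ(a), where h_(1)⊗h_(2)⊗h_(3) denotes the iterated coproduct (Δ⊗id)(Δ(h)). -/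
/-!
STATEMENT 7.
Let `H` be a finite-dimensional Hopf algebra over an algebraically closed field `k`
with modulus `γ`, and let `λ ∈ H*` be a right cointegral, i.e.
`(λ ⊗ id)(Δ h) = λ(h) · 1` for all `h ∈ H`.  Then for all `a, h ∈ H`,
`γ⁻¹(h₍₂₎) · λ(S(h₍₁₎)·a·h₍₃₎) = ε(h) · λ(a)`,
where `h₍₁₎ ⊗ h₍₂₎ ⊗ h₍₃₎ = (Δ ⊗ id)(Δ h)` and `γ⁻¹ = γ ∘ S`.
-/

open TensorProduct LinearMap

section Stmt7Aux

open Coalgebra HopfAlgebra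

set_option synthInstance.maxHeartbeats 1000000
set_option maxHeartbeats 4000000

variable {k H : Type} [Field k] [Ring H] [HopfAlgebra k H]

local notation "Δ" => Coalgebra.comul (R := k) (A := H)
local notation "ε'" => Coalgebra.counit (R := k) (A := H)
local notation "𝑆" => HopfAlgebra.antipode (R := k) (A := H)

/-- contraction (λ ⊗ id) : H⊗H → H -/
noncomputable def s7lT (lam : H →ₗ[k] k) : H ⊗[k] H →ₗ[k] H :=
  (TensorProduct.lid k H).toLinearMap ∘ₗ LinearMap.rTensor H lam

lemma s7lT_tmul (lam : H →ₗ[k] k) (u v : H) : s7lT lam (u ⊗ₜ[k] v) = lam u • v := by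
  simp [s7lT]

lemma s7lT_absL (lam : H →ₗ[k] k) (g : H) (A : H ⊗[k] H) :
    s7lT lam ((1 ⊗ₜ[k] g) * A) = g * s7lT lam A := by
  induction A using TensorProduct.induction_on with
  | zero => simp
  | tmul u v => simp [s7lT_tmul, Algebra.TensorProduct.tmul_mul_tmul, mul_smul_comm]
  | add x y hx hy => simp [mul_add, hx, hy]

lemma s7lT_absR (lam : H →ₗ[k] k) (g : H) (A : H ⊗[k] H) :
    s7lT lam (A * (1 ⊗ₜ[k] g)) = s7lT lam A * g := by
  induction A using TensorProduct.induction_on with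
  | zero => simp
  | tmul u v => simp [s7lT_tmul, Algebra.TensorProduct.tmul_mul_tmul, smul_mul_assoc]
  | add x y hx hy => simp [add_mul, hx, hy]

lemma s7_antipode_one : 𝑆 (1 : H) = (1 : H) := by
  have := HopfAlgebra.mul_antipode_rTensor_comul_apply (R := k) (A := H) (1 : H)
  rw [Bialgebra.comul_one, Algebra.TensorProduct.one_def] at this
  simpa using this

noncomputable def s7incl1 : H →ₗ[k] H ⊗[k] H := (TensorProduct.mk k H H).flip 1
noncomputable def s7incl2 : H →ₗ[k] H ⊗[k] H := TensorProduct.mk k H H 1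

lemma s7incl1_apply (u : H) : (s7incl1 : H →ₗ[k] H ⊗[k] H) u = u ⊗ₜ[k] 1 := rfl
lemma s7incl2_apply (u : H) : (s7incl2 : H →ₗ[k] H ⊗[k] H) u = 1 ⊗ₜ[k] u := rfl

noncomputable def s7mulHH : (H ⊗[k] H) ⊗[k] (H ⊗[k] H) →ₗ[k] H ⊗[k] H :=
  LinearMap.mul' k (H ⊗[k] H)

-- master reshuffle for m4:  ∑ (S u ⊗ 1) * Δv  over t = ∑ u⊗v
lemma s7_m4_aux (t : H ⊗[k] H) :
    s7mulHH (map ((s7incl1 : H →ₗ[k] H ⊗[k] H) ∘ₗ 𝑆) Δ t) =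
      (rTensor H (LinearMap.mul' k H ∘ₗ rTensor H 𝑆))
        ((TensorProduct.assoc k H H H).symm ((lTensor H Δ) t)) := by
  induction t using TensorProduct.induction_on with
  | zero => simp only [map_zero, LinearEquiv.map_zero]
  | add x y hx hy => simp only [map_add, LinearEquiv.map_add, hx, hy]
  | tmul u v =>
    simp only [map_tmul, lTensor_tmul, coe_comp, Function.comp_apply, s7incl1_apply]
    induction (Δ v : H ⊗[k] H) using TensorProduct.induction_on with
    | zero => simp [s7mulHH]
    | add x y hx hy => simp_all [mul_add, tmul_add, map_add]
    | tmul p q =>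
      simp [s7mulHH, LinearMap.mul'_apply, Algebra.TensorProduct.tmul_mul_tmul]

/-- ∑ S(g₁)g₂ ⊗ g₃ = 1 ⊗ g -/
lemma s7_m4 (g : H) :
    s7mulHH (map ((s7incl1 : H →ₗ[k] H ⊗[k] H) ∘ₗ 𝑆) Δ (Δ g)) = 1 ⊗ₜ[k] g := by
  rw [s7_m4_aux, Coalgebra.coassoc_symm_apply, ← LinearMap.comp_apply,
    ← LinearMap.rTensor_comp, LinearMap.comp_assoc, HopfAlgebra.mul_antipode_rTensor_comul,
    LinearMap.rTensor_comp, LinearMap.comp_apply, Coalgebra.rTensor_counit_comul]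
  simp

-- master reshuffle for m1: ∑ Δu * (1 ⊗ S v)
lemma s7_m1_aux (t : H ⊗[k] H) :
    s7mulHH (map Δ ((s7incl2 : H →ₗ[k] H ⊗[k] H) ∘ₗ 𝑆) t) =
      (lTensor H (LinearMap.mul' k H ∘ₗ lTensor H 𝑆))
        ((TensorProduct.assoc k H H H) ((rTensor H Δ) t)) := by
  induction t using TensorProduct.induction_on with
  | zero => simp only [map_zero, LinearEquiv.map_zero]
  | add x y hx hy => simp only [map_add, LinearEquiv.map_add, hx, hy]
  | tmul u v =>
    simp only [map_tmul, rTensor_tmul, coe_comp, Function.comp_apply, s7incl2_apply]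
    induction (Δ u : H ⊗[k] H) using TensorProduct.induction_on with
    | zero => simp [s7mulHH]
    | add x y hx hy => simp_all [add_mul, add_tmul, map_add]
    | tmul p q =>
      simp [s7mulHH, LinearMap.mul'_apply, Algebra.TensorProduct.tmul_mul_tmul]

/-- ∑ g₁ ⊗ g₂S(g₃) = g ⊗ 1 -/
lemma s7_m1 (g : H) :
    s7mulHH (map Δ ((s7incl2 : H →ₗ[k] H ⊗[k] H) ∘ₗ 𝑆) (Δ g)) = g ⊗ₜ[k] 1 := by
  rw [s7_m1_aux, Coalgebra.coassoc_apply, ← LinearMap.comp_apply,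
    ← LinearMap.lTensor_comp, LinearMap.comp_assoc, HopfAlgebra.mul_antipode_lTensor_comul,
    LinearMap.lTensor_comp, LinearMap.comp_apply, Coalgebra.lTensor_counit_comul]
  simp


/-- convolution γ * S -/
noncomputable def s7P (γ : H →ₐ[k] k) : H →ₗ[k] H :=
  (TensorProduct.lid k H).toLinearMap ∘ₗ map γ.toLinearMap 𝑆 ∘ₗ Coalgebra.comul (R := k)

lemma s7P_apply_tmulcase (γ : H →ₐ[k] k) (g : H) :
    s7P (k := k) (H := H) γ g =
      (TensorProduct.lid k H) (map γ.toLinearMap 𝑆 (Δ g)) := rfl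

section cLemmas

variable (c : H) (γ : H →ₐ[k] k) (lam : H →ₗ[k] k)

-- (E):  (S g ⊗ 1) * Δc = (1 ⊗ g) * Δc
lemma s7_E (hc : ∀ h : H, h * c = ε' h • c) (g : H) :
    ((𝑆 g) ⊗ₜ[k] (1 : H)) * Δ c = ((1 : H) ⊗ₜ[k] g) * Δ c := by
  have hmapc : (Coalgebra.comul (R := k) (A := H)) ∘ₗ LinearMap.mulRight k c
      = LinearMap.toSpanSingleton k (H ⊗[k] H) (Δ c) ∘ₗ (ε' : H →ₗ[k] k) := by
    ext u
    simp [LinearMap.mulRight_apply, hc u, LinearMap.toSpanSingleton_apply]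
  have hmapc' : (Coalgebra.comul (R := k) (A := H)) ∘ₗ LinearMap.mulRight k c
      = LinearMap.mulRight k (Δ c) ∘ₗ (Coalgebra.comul (R := k) (A := H)) := by
    ext u
    simp [LinearMap.mulRight_apply, Bialgebra.comul_mul]
  -- evaluation (a)
  have ha : ∀ t : H ⊗[k] H,
      s7mulHH (map ((s7incl1 : H →ₗ[k] H ⊗[k] H) ∘ₗ 𝑆)
        (LinearMap.toSpanSingleton k (H ⊗[k] H) (Δ c) ∘ₗ (ε' : H →ₗ[k] k)) t)
      = ((((s7incl1 : H →ₗ[k] H ⊗[k] H) ∘ₗ 𝑆)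
          ((TensorProduct.rid k H) (lTensor H (ε' : H →ₗ[k] k) t)))) * Δ c := by
    intro t
    induction t using TensorProduct.induction_on with
    | zero => simp
    | add x y hx hy => simp only [map_add, LinearEquiv.map_add, hx, hy, add_mul]
    | tmul u v =>
      simp [s7mulHH, s7incl1_apply, LinearMap.toSpanSingleton_apply, smul_mul_assoc,
        LinearMap.mul'_apply, TensorProduct.smul_tmul', map_smul]
  have hb : ∀ t : H ⊗[k] H,
      s7mulHH (map ((s7incl1 : H →ₗ[k] H ⊗[k] H) ∘ₗ 𝑆)
        (LinearMap.mulRight k (Δ c) ∘ₗ (Coalgebra.comul (R := k) (A := H))) t)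
      = s7mulHH (map ((s7incl1 : H →ₗ[k] H ⊗[k] H) ∘ₗ 𝑆) Δ t) * Δ c := by
    intro t
    induction t using TensorProduct.induction_on with
    | zero => simp
    | add x y hx hy => simp only [map_add, LinearEquiv.map_add, hx, hy, add_mul, map_add]
    | tmul u v =>
      simp only [map_tmul, coe_comp, Function.comp_apply, LinearMap.mulRight_apply]
      simp [s7mulHH, mul_assoc]
  have e1 : s7mulHH (map ((s7incl1 : H →ₗ[k] H ⊗[k] H) ∘ₗ 𝑆)
      ((Coalgebra.comul (R := k) (A := H)) ∘ₗ LinearMap.mulRight k c) (Δ g))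
      = ((𝑆 g) ⊗ₜ[k] (1 : H)) * Δ c := by
    rw [hmapc, ha (Δ g), Coalgebra.lTensor_counit_comul]
    simp [s7incl1_apply]
  have e2 : s7mulHH (map ((s7incl1 : H →ₗ[k] H ⊗[k] H) ∘ₗ 𝑆)
      ((Coalgebra.comul (R := k) (A := H)) ∘ₗ LinearMap.mulRight k c) (Δ g))
      = ((1 : H) ⊗ₜ[k] g) * Δ c := by
    rw [hmapc', hb (Δ g), s7_m4 g]
  rw [← e1, e2]


-- (D): Δc * (g ⊗ 1) = Δc * (1 ⊗ P g)
lemma s7_D (hγ : ∀ h : H, c * h = γ h • c) (g : H) :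
    Δ c * (g ⊗ₜ[k] (1 : H)) = Δ c * ((1 : H) ⊗ₜ[k] (s7P (k := k) (H := H) γ g)) := by
  have hmapc : (Coalgebra.comul (R := k) (A := H)) ∘ₗ LinearMap.mulLeft k c
      = LinearMap.toSpanSingleton k (H ⊗[k] H) (Δ c) ∘ₗ (γ.toLinearMap : H →ₗ[k] k) := by
    ext u
    simp [LinearMap.mulLeft_apply, hγ u, LinearMap.toSpanSingleton_apply]
  have hmapc' : (Coalgebra.comul (R := k) (A := H)) ∘ₗ LinearMap.mulLeft k c
      = LinearMap.mulLeft k (Δ c) ∘ₗ (Coalgebra.comul (R := k) (A := H)) := by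
    ext u
    simp [LinearMap.mulLeft_apply, Bialgebra.comul_mul]
  have ha : ∀ t : H ⊗[k] H,
      s7mulHH (map (LinearMap.toSpanSingleton k (H ⊗[k] H) (Δ c) ∘ₗ (γ.toLinearMap : H →ₗ[k] k))
        ((s7incl2 : H →ₗ[k] H ⊗[k] H) ∘ₗ 𝑆) t)
      = Δ c * ((s7incl2 : H →ₗ[k] H ⊗[k] H)
          ((TensorProduct.lid k H) (map (γ.toLinearMap : H →ₗ[k] k) 𝑆 t))) := by
    intro t
    induction t using TensorProduct.induction_on with
    | zero => simp
    | add x y hx hy => simp only [map_add, LinearEquiv.map_add, hx, hy, mul_add]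
    | tmul u v =>
      simp [s7mulHH, s7incl2_apply, LinearMap.toSpanSingleton_apply,
        LinearMap.mul'_apply, smul_mul_assoc, mul_smul_comm, TensorProduct.tmul_smul]
  have hb : ∀ t : H ⊗[k] H,
      s7mulHH (map (LinearMap.mulLeft k (Δ c) ∘ₗ (Coalgebra.comul (R := k) (A := H)))
        ((s7incl2 : H →ₗ[k] H ⊗[k] H) ∘ₗ 𝑆) t)
      = Δ c * s7mulHH (map Δ ((s7incl2 : H →ₗ[k] H ⊗[k] H) ∘ₗ 𝑆) t) := by
    intro t
    induction t using TensorProduct.induction_on with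
    | zero => simp
    | add x y hx hy => simp only [map_add, LinearEquiv.map_add, hx, hy, mul_add, map_add]
    | tmul u v =>
      simp only [map_tmul, coe_comp, Function.comp_apply, LinearMap.mulLeft_apply]
      simp [s7mulHH, mul_assoc]
  have e1 : s7mulHH (map ((Coalgebra.comul (R := k) (A := H)) ∘ₗ LinearMap.mulLeft k c)
      ((s7incl2 : H →ₗ[k] H ⊗[k] H) ∘ₗ 𝑆) (Δ g))
      = Δ c * ((1 : H) ⊗ₜ[k] (s7P (k := k) (H := H) γ g)) := by
    rw [hmapc, ha (Δ g)]
    rfl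
  have e2 : s7mulHH (map ((Coalgebra.comul (R := k) (A := H)) ∘ₗ LinearMap.mulLeft k c)
      ((s7incl2 : H →ₗ[k] H ⊗[k] H) ∘ₗ 𝑆) (Δ g))
      = Δ c * (g ⊗ₜ[k] (1 : H)) := by
    rw [hmapc', hb (Δ g), s7_m1 g]
  rw [← e2, e1]

-- (star): ∑ λ(x y₁) • S y₂ = ∑ λ(x₁ y) • x₂
lemma s7_star
    (hlam : ∀ h : H, (TensorProduct.lid k H) ((LinearMap.rTensor H lam) (Δ h)) = lam h • (1 : H))
    (x y : H) :
    (TensorProduct.lid k H) (map (lam ∘ₗ LinearMap.mulLeft k x) 𝑆 (Δ y))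
      = s7lT lam (Δ x * (y ⊗ₜ[k] (1 : H))) := by
  have ha : ∀ t : H ⊗[k] H,
      s7lT lam (s7mulHH (map ((Coalgebra.comul (R := k) (A := H)) ∘ₗ LinearMap.mulLeft k x)
        ((s7incl2 : H →ₗ[k] H ⊗[k] H) ∘ₗ 𝑆) t))
      = (TensorProduct.lid k H) (map (lam ∘ₗ LinearMap.mulLeft k x) 𝑆 t) := by
    intro t
    induction t using TensorProduct.induction_on with
    | zero => simp
    | add a b h1 h2 => simp only [map_add, LinearEquiv.map_add, h1, h2]
    | tmul u v =>
      simp only [map_tmul, coe_comp, Function.comp_apply, LinearMap.mulLeft_apply,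
        s7incl2_apply]
      rw [show (s7mulHH (Δ (x * u) ⊗ₜ[k] ((1:H) ⊗ₜ[k] 𝑆 v)) : H ⊗[k] H)
            = Δ (x*u) * ((1:H) ⊗ₜ[k] 𝑆 v) from rfl]
      rw [s7lT_absR lam (𝑆 v) (Δ (x*u))]
      have := hlam (x*u)
      rw [show s7lT lam (Δ (x*u)) = lam (x*u) • (1:H) from this]
      simp [smul_mul_assoc]
  have hb : ∀ t : H ⊗[k] H,
      s7mulHH (map ((Coalgebra.comul (R := k) (A := H)) ∘ₗ LinearMap.mulLeft k x)
        ((s7incl2 : H →ₗ[k] H ⊗[k] H) ∘ₗ 𝑆) t)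
      = Δ x * s7mulHH (map Δ ((s7incl2 : H →ₗ[k] H ⊗[k] H) ∘ₗ 𝑆) t) := by
    intro t
    induction t using TensorProduct.induction_on with
    | zero => simp
    | add a b h1 h2 => simp only [map_add, LinearEquiv.map_add, h1, h2, mul_add, map_add]
    | tmul u v =>
      simp only [map_tmul, coe_comp, Function.comp_apply, LinearMap.mulLeft_apply]
      rw [Bialgebra.comul_mul]
      show (s7mulHH ((Δ x * Δ u) ⊗ₜ[k] _) : H ⊗[k] H) = _
      simp only [s7mulHH, LinearMap.mul'_apply, mul_assoc]
  have := ha (Δ y)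
  rw [hb (Δ y), s7_m1 y] at this
  exact this.symm

-- (I''): ∑ λ(x c₁) • S c₂ = λ(c) • x
lemma s7_I2 (hc : ∀ h : H, h * c = ε' h • c)
    (hlam : ∀ h : H, (TensorProduct.lid k H) ((LinearMap.rTensor H lam) (Δ h)) = lam h • (1 : H))
    (x : H) :
    (TensorProduct.lid k H) (map (lam ∘ₗ LinearMap.mulLeft k x) 𝑆 (Δ c)) = lam c • x := by
  rw [s7_star lam hlam x c]
  have hmul : ∀ t : H ⊗[k] H, t * (c ⊗ₜ[k] (1:H)) = rTensor H (LinearMap.mulRight k c) t := by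
    intro t
    induction t using TensorProduct.induction_on with
    | zero => simp
    | add a b h1 h2 => simp only [add_mul, map_add, h1, h2]
    | tmul u v => simp [Algebra.TensorProduct.tmul_mul_tmul]
  rw [hmul (Δ x)]
  have hmr : LinearMap.mulRight k c = LinearMap.toSpanSingleton k H c ∘ₗ (ε' : H →ₗ[k] k) := by
    ext u; simp [hc u, LinearMap.toSpanSingleton_apply]
  rw [hmr]
  have : ∀ t : H ⊗[k] H,
      s7lT lam (rTensor H (LinearMap.toSpanSingleton k H c ∘ₗ (ε' : H →ₗ[k] k)) t)
      = lam c • (TensorProduct.lid k H) (rTensor H (ε' : H →ₗ[k] k) t) := by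
    intro t
    induction t using TensorProduct.induction_on with
    | zero => simp
    | add a b h1 h2 => simp only [map_add, LinearEquiv.map_add, h1, h2, smul_add]
    | tmul u v =>
      simp [s7lT_tmul, LinearMap.toSpanSingleton_apply, mul_comm, mul_smul]
  rw [this (Δ x), Coalgebra.rTensor_counit_comul]
  simp

-- (J) : ∑ λ(c₁ g) • c₂ = λ(c) • P g
lemma s7_J (hγ : ∀ h : H, c * h = γ h • c)
    (hlam : ∀ h : H, (TensorProduct.lid k H) ((LinearMap.rTensor H lam) (Δ h)) = lam h • (1 : H))
    (g : H) :
    s7lT lam (Δ c * (g ⊗ₜ[k] (1 : H))) = lam c • s7P (k := k) (H := H) γ g := by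
  rw [s7_D c γ hγ g, s7lT_absR lam _ (Δ c),
    show s7lT lam (Δ c) = lam c • (1:H) from hlam c]
  simp [smul_mul_assoc]

end cLemmas

section gLemmas
variable (γ : H →ₐ[k] k)

/-- the inner element t(h) from the statement -/
noncomputable def s7t (h : H) : H ⊗[k] H :=
  (LinearMap.rTensor H
      ((TensorProduct.rid k H).toLinearMap.comp
        (LinearMap.lTensor H ((γ.toLinearMap).comp (HopfAlgebra.antipode (R := k))))))
    ((LinearMap.rTensor H (Coalgebra.comul (R := k))) (Coalgebra.comul (R := k) h))

-- (SL1): ∑ γ(S z₁) • P z₂ = S z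
lemma s7_SL1 (z : H) :
    (TensorProduct.lid k H) (map (γ.toLinearMap ∘ₗ 𝑆) (s7P (k := k) (H := H) γ) (Δ z)) = 𝑆 z := by
  have hsplit : map (γ.toLinearMap ∘ₗ 𝑆) (s7P (k := k) (H := H) γ)
      = map (γ.toLinearMap ∘ₗ 𝑆)
          ((TensorProduct.lid k H).toLinearMap ∘ₗ map γ.toLinearMap 𝑆) ∘ₗ
        lTensor H (Coalgebra.comul (R := k)) := by
    apply TensorProduct.ext'
    intro u v
    rfl
  rw [hsplit, LinearMap.comp_apply, ← Coalgebra.coassoc_apply]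
  set X := (LinearMap.rTensor H (Coalgebra.comul (R := k))) (Δ z) with hX
  have step2 : ∀ X : (H ⊗[k] H) ⊗[k] H,
      (TensorProduct.lid k H) (map (γ.toLinearMap ∘ₗ 𝑆)
        ((TensorProduct.lid k H).toLinearMap ∘ₗ map γ.toLinearMap 𝑆)
        ((TensorProduct.assoc k H H H) X))
      = (TensorProduct.lid k H)
          (map (γ.toLinearMap ∘ₗ (LinearMap.mul' k H) ∘ₗ rTensor H 𝑆) 𝑆 X) := by
    intro X
    induction X using TensorProduct.induction_on with
    | zero => simp
    | add a b h1 h2 => simp only [map_add, LinearEquiv.map_add, h1, h2]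
    | tmul p w =>
      induction p using TensorProduct.induction_on with
      | zero => simp
      | add a b h1 h2 =>
        simp only [add_tmul, map_add, LinearEquiv.map_add, h1, h2]
      | tmul u v =>
        simp only [TensorProduct.assoc_tmul, map_tmul, coe_comp, Function.comp_apply,
          LinearEquiv.coe_coe, TensorProduct.lid_tmul, LinearMap.mul'_apply,
          rTensor_tmul, map_smul, smul_smul]
        simp only [AlgHom.toLinearMap_apply, map_mul]
  rw [step2 X]
  have step3 : map (γ.toLinearMap ∘ₗ (LinearMap.mul' k H) ∘ₗ rTensor H 𝑆)
        (𝑆 : H →ₗ[k] H)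
      = map γ.toLinearMap 𝑆 ∘ₗ rTensor H ((LinearMap.mul' k H) ∘ₗ rTensor H 𝑆) := by
    have := TensorProduct.map_comp (γ.toLinearMap) ((LinearMap.mul' k H) ∘ₗ rTensor H 𝑆)
      (𝑆 : H →ₗ[k] H) (LinearMap.id)
    simpa using this.symm
  rw [step3, LinearMap.comp_apply, hX, ← LinearMap.comp_apply (rTensor H _),
    ← LinearMap.rTensor_comp, LinearMap.comp_assoc,
    HopfAlgebra.mul_antipode_rTensor_comul]
  have step5 : ∀ t : H ⊗[k] H,
      (TensorProduct.lid k H) (map γ.toLinearMap 𝑆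
        (rTensor H ((Algebra.linearMap k H) ∘ₗ (ε' : H →ₗ[k] k)) t))
      = 𝑆 ((TensorProduct.lid k H) (rTensor H (ε' : H →ₗ[k] k) t)) := by
    intro t
    induction t using TensorProduct.induction_on with
    | zero => simp
    | add a b h1 h2 => simp only [map_add, LinearEquiv.map_add, h1, h2]
    | tmul u v =>
      simp [Algebra.linearMap_apply, Algebra.algebraMap_eq_smul_one, map_smul, smul_smul]
  rw [step5 (Δ z), Coalgebra.rTensor_counit_comul]
  simp

-- contraction lemma: mul' (lTensor P (t h)) = ε h • 1
lemma s7_contr (h : H) :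
    (LinearMap.mul' k H) (lTensor H (s7P (k := k) (H := H) γ) (s7t γ h)) = ε' h • (1 : H) := by
  unfold s7t
  rw [← LinearMap.comp_apply (lTensor H _), LinearMap.lTensor_comp_rTensor]
  set X := (LinearMap.rTensor H (Coalgebra.comul (R := k))) (Δ h) with hX
  have key : ∀ X : (H ⊗[k] H) ⊗[k] H,
      (LinearMap.mul' k H) (map
        ((TensorProduct.rid k H).toLinearMap.comp
          (LinearMap.lTensor H ((γ.toLinearMap).comp (HopfAlgebra.antipode (R := k)))))
        (s7P (k := k) (H := H) γ) X)
      = (LinearMap.mul' k H) (lTensor H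
          ((TensorProduct.lid k H).toLinearMap ∘ₗ
            map (γ.toLinearMap ∘ₗ 𝑆) (s7P (k := k) (H := H) γ))
          ((TensorProduct.assoc k H H H) X)) := by
    intro X
    induction X using TensorProduct.induction_on with
    | zero => simp
    | add a b h1 h2 => simp only [map_add, LinearEquiv.map_add, h1, h2]
    | tmul p w =>
      induction p using TensorProduct.induction_on with
      | zero => simp
      | add a b h1 h2 => simp only [add_tmul, map_add, LinearEquiv.map_add, h1, h2]
      | tmul u v =>
        simp only [TensorProduct.assoc_tmul, map_tmul, lTensor_tmul, coe_comp,
          Function.comp_apply, LinearEquiv.coe_coe, TensorProduct.lid_tmul,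
          TensorProduct.rid_tmul, lTensor_tmul, LinearMap.mul'_apply, map_smul,
          smul_mul_assoc, mul_smul_comm]
  rw [key X, hX, Coalgebra.coassoc_apply, ← LinearMap.comp_apply (lTensor H _),
    ← LinearMap.lTensor_comp]
  have hS : ((TensorProduct.lid k H).toLinearMap ∘ₗ
      map (γ.toLinearMap ∘ₗ 𝑆) (s7P (k := k) (H := H) γ)) ∘ₗ (Coalgebra.comul (R := k))
      = (𝑆 : H →ₗ[k] H) := by
    apply LinearMap.ext
    intro z
    exact s7_SL1 γ z
  rw [hS]
  rw [HopfAlgebra.mul_antipode_lTensor_comul_apply]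
  rw [Algebra.algebraMap_eq_smul_one]

end gLemmas

/-- sandwich map: (p ⊗ q) ↦ (u ↦ S p * (u * q)) -/
noncomputable def s7sand : H ⊗[k] H →ₗ[k] H →ₗ[k] H :=
  TensorProduct.lift
    (LinearMap.mk₂ k (fun p q => (LinearMap.mulLeft k (𝑆 p)) ∘ₗ (LinearMap.mulRight k q))
      (fun p p' q => by ext u; simp [add_mul, map_add])
      (fun r p q => by ext u; simp [smul_mul_assoc, map_smul])
      (fun p q q' => by ext u; simp [mul_add])
      (fun r p q => by ext u; simp [mul_smul_comm]))

lemma s7sand_tmul (p q u : H) :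
    s7sand (p ⊗ₜ[k] q) u = 𝑆 p * (u * q) := by
  simp [s7sand]

-- bridge to the statement's expression
lemma s7_bridge (a : H) (T : H ⊗[k] H) :
    (LinearMap.mul' k H)
        ((LinearMap.rTensor H ((LinearMap.mulRight k a).comp (HopfAlgebra.antipode (R := k)))) T)
      = s7sand T a := by
  induction T using TensorProduct.induction_on with
  | zero => simp
  | add x y h1 h2 => simp only [map_add, h1, h2, LinearMap.add_apply]
  | tmul u v => simp [s7sand_tmul, mul_assoc]

-- main computation (V): ∑ F(c₁) • c₂ = (ε h * λ c) • 1, where F = λ ∘ sand (t h)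
lemma s7_V (c : H) (γ : H →ₐ[k] k) (lam : H →ₗ[k] k)
    (hc : ∀ h : H, h * c = ε' h • c)
    (hγ : ∀ h : H, c * h = γ h • c)
    (hlam : ∀ h : H, (TensorProduct.lid k H) ((LinearMap.rTensor H lam) (Δ h)) = lam h • (1 : H))
    (h : H) :
    (TensorProduct.lid k H) (rTensor H (lam ∘ₗ s7sand (s7t γ h)) (Δ c))
      = (ε' h * lam c) • (1 : H) := by
  have claim1 : ∀ u v : H,
      (TensorProduct.lid k H) (rTensor H (lam ∘ₗ s7sand (u ⊗ₜ[k] v)) (Δ c))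
        = lam c • (u * s7P (k := k) (H := H) γ v) := by
    intro u v
    have sub1 : ∀ t : H ⊗[k] H,
        (TensorProduct.lid k H) (rTensor H (lam ∘ₗ s7sand (u ⊗ₜ[k] v)) t)
          = s7lT lam ((𝑆 u ⊗ₜ[k] (1:H)) * t * (v ⊗ₜ[k] (1:H))) := by
      intro t
      induction t using TensorProduct.induction_on with
      | zero => simp
      | add x y h1 h2 =>
        simp only [map_add, LinearEquiv.map_add, h1, h2, add_mul, mul_add]
      | tmul p q =>
        simp only [rTensor_tmul, coe_comp, Function.comp_apply, s7sand_tmul,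
          Algebra.TensorProduct.tmul_mul_tmul, one_mul, mul_one, s7lT_tmul,
          TensorProduct.lid_tmul]
        rw [mul_assoc]
    rw [sub1 (Δ c), s7_E c hc u, mul_assoc, s7lT_absL, s7_J c γ lam hγ hlam v,
      mul_smul_comm]
  have claim2 : ∀ T : H ⊗[k] H,
      (TensorProduct.lid k H) (rTensor H (lam ∘ₗ s7sand T) (Δ c))
        = lam c • (LinearMap.mul' k H) (lTensor H (s7P (k := k) (H := H) γ) T) := by
    intro T
    induction T using TensorProduct.induction_on with
    | zero => simp [LinearMap.comp_zero, LinearMap.rTensor_zero]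
    | add x y h1 h2 =>
      rw [map_add, map_add, LinearMap.comp_add, LinearMap.rTensor_add, LinearMap.add_apply,
        LinearEquiv.map_add, h1, h2, map_add, smul_add]
    | tmul u v =>
      rw [claim1 u v]
      simp
  rw [claim2 (s7t γ h), s7_contr γ h, smul_smul, mul_comm]
/-- degenerate case: a right cointegral vanishing on the left integral is zero -/
lemma s7_degenerate [FiniteDimensional k H] (c : H) (hc_ne : c ≠ 0)
    (hc : ∀ h : H, h * c = ε' h • c)
    (γ : H →ₐ[k] k) (hγ : ∀ h : H, c * h = γ h • c)
    (lam : H →ₗ[k] k)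
    (hlam : ∀ h : H, (TensorProduct.lid k H) ((LinearMap.rTensor H lam) (Δ h)) = lam h • (1 : H))
    (hθ : lam c = 0) : ∀ y : H, lam y = 0 := by
  classical
  set b := Module.finBasis k H with hb
  -- tensor decomposition along the basis
  have hdec : ∀ t : H ⊗[k] H,
      t = ∑ j, ((TensorProduct.rid k H) (lTensor H (b.coord j) t)) ⊗ₜ[k] b j := by
    intro t
    induction t using TensorProduct.induction_on with
    | zero => simp
    | add x y h1 h2 =>
      conv_lhs => rw [h1, h2]
      rw [← Finset.sum_add_distrib]
      refine Finset.sum_congr rfl fun j _ => ?_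
      rw [map_add, LinearEquiv.map_add, add_tmul]
    | tmul u v =>
      have hj : ∀ j, ((TensorProduct.rid k H) (lTensor H (b.coord j) (u ⊗ₜ[k] v))) ⊗ₜ[k] b j
          = u ⊗ₜ[k] (b.repr v j • b j) := by
        intro j
        rw [lTensor_tmul, TensorProduct.rid_tmul, Module.Basis.coord_apply, TensorProduct.smul_tmul]
      rw [Finset.sum_congr rfl (fun j _ => hj j), ← TensorProduct.tmul_sum, Module.Basis.sum_repr]
  -- membership in the left kernel propagates to comul legs
  have K1 : ∀ x : H, (∀ y, lam (x * y) = 0) →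
      ∀ j, (∀ y, lam (((TensorProduct.rid k H) (lTensor H (b.coord j) (Δ x))) * y) = 0) := by
    intro x hx j y
    have hz0 : (lam ∘ₗ LinearMap.mulLeft k x) = 0 := by
      ext u; simpa using hx u
    have hstar := s7_star lam hlam x y
    rw [hz0, TensorProduct.map_zero_left] at hstar
    rw [LinearMap.zero_apply, map_zero] at hstar
    -- hstar : 0 = s7lT lam (Δ x * (y ⊗ₜ 1))
    have hexp : s7lT lam (Δ x * (y ⊗ₜ[k] (1:H)))
        = ∑ j', lam (((TensorProduct.rid k H) (lTensor H (b.coord j') (Δ x))) * y) • b j' := by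
      conv_lhs => rw [hdec (Δ x)]
      rw [Finset.sum_mul, map_sum]
      refine Finset.sum_congr rfl fun j' _ => ?_
      rw [Algebra.TensorProduct.tmul_mul_tmul, mul_one, s7lT_tmul]
    have hzero : (∑ j', lam (((TensorProduct.rid k H) (lTensor H (b.coord j') (Δ x))) * y) • b j')
        = 0 := by rw [← hexp, ← hstar]
    have := Fintype.linearIndependent_iff.mp b.linearIndependent
      (fun j' => lam (((TensorProduct.rid k H) (lTensor H (b.coord j') (Δ x))) * y)) hzero
    exact this j
  -- counit reconstruction and antipode identity from the decomposition
  have idA : ∀ x : H, x = ∑ j, ε' ((TensorProduct.rid k H) (lTensor H (b.coord j) (Δ x))) • b j := by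
    intro x
    have h0 : (TensorProduct.lid k H) (rTensor H (ε' : H →ₗ[k] k) (Δ x)) = x := by
      rw [Coalgebra.rTensor_counit_comul]; simp
    conv_lhs => rw [← h0]
    conv_lhs => rw [hdec (Δ x)]
    rw [map_sum, map_sum]
    refine Finset.sum_congr rfl fun j _ => ?_
    simp
  have idB : ∀ x : H,
      (∑ j, ((TensorProduct.rid k H) (lTensor H (b.coord j) (Δ x))) * 𝑆 (b j)) = ε' x • 1 := by
    intro x
    have h0 := HopfAlgebra.mul_antipode_lTensor_comul_apply (R := k) (A := H) x
    rw [Algebra.algebraMap_eq_smul_one] at h0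
    conv_rhs => rw [← h0]
    conv_rhs => rw [hdec (Δ x)]
    rw [map_sum, map_sum]
    refine Finset.sum_congr rfl fun j _ => ?_
    simp
  have hcK : ∀ y, lam (c * y) = 0 := by
    intro y; rw [hγ y]; simp [hθ]
  by_cases hK : ∀ x : H, (∀ y, lam (x * y) = 0) → ε' x = 0
  · exfalso
    apply hc_ne
    have := idA c
    rw [Finset.sum_congr rfl (fun j _ => by rw [hK _ (K1 c hcK j), zero_smul])] at this
    simpa using this
  · push_neg at hK
    obtain ⟨x₀, hx₀, hε₀⟩ := hK
    intro y
    have hmul := congrArg (fun z : H => lam (z * y)) (idB x₀)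
    rw [Finset.sum_mul, map_sum] at hmul
    have : (∑ j, lam ((((TensorProduct.rid k H) (lTensor H (b.coord j) (Δ x₀))) * 𝑆 (b j)) * y))
        = 0 := by
      refine Finset.sum_eq_zero fun j _ => ?_
      rw [mul_assoc]
      exact K1 x₀ hx₀ j (𝑆 (b j) * y)
    rw [this] at hmul
    rw [smul_mul_assoc, one_mul, map_smul, smul_eq_mul] at hmul
    have h2 : ε' x₀ * lam y = 0 := by
      rw [← smul_eq_mul, ← map_smul] at hmul ⊢
      exact hmul.symm
    exact (mul_eq_zero.mp h2).resolve_left hε₀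

section NonDeg

variable [FiniteDimensional k H]

/-- the pairing map x ↦ λ(x ⬝ -) -/
noncomputable def s7Phi (lam : H →ₗ[k] k) : H →ₗ[k] Module.Dual k H :=
  (LinearMap.llcomp k H H k lam) ∘ₗ (LinearMap.mul k H)

lemma s7Phi_apply (lam : H →ₗ[k] k) (x y : H) : s7Phi lam x y = lam (x * y) := rfl

lemma s7_rker (c : H) (lam : H →ₗ[k] k)
    (hc : ∀ h : H, h * c = ε' h • c)
    (hlam : ∀ h : H, (TensorProduct.lid k H) ((LinearMap.rTensor H lam) (Δ h)) = lam h • (1 : H))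
    (hθ : lam c ≠ 0)
    (u : H) (hu : ∀ w : H, lam (w * u) = 0) : u = 0 := by
  have hinj : Function.Injective (s7Phi lam) := by
    rw [← LinearMap.ker_eq_bot]
    rw [Submodule.eq_bot_iff]
    intro x hx
    rw [LinearMap.mem_ker] at hx
    have hzero : (lam ∘ₗ LinearMap.mulLeft k x) = 0 := by
      ext u'
      have : s7Phi lam x u' = 0 := by rw [hx]; rfl
      simpa [s7Phi_apply] using this
    have hI2 := s7_I2 c lam hc hlam x
    rw [hzero, TensorProduct.map_zero_left, LinearMap.zero_apply, map_zero] at hI2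
    exact (smul_eq_zero.mp hI2.symm).resolve_left hθ
  have hsurj : Function.Surjective (s7Phi lam) := by
    have hfr : Module.finrank k H = Module.finrank k (Module.Dual k H) :=
      Subspace.dual_finrank_eq.symm
    exact (LinearMap.injective_iff_surjective_of_finrank_eq_finrank hfr).mp hinj
  have : ∀ f : Module.Dual k H, f u = 0 := by
    intro f
    obtain ⟨w, rfl⟩ := hsurj f
    simpa [s7Phi_apply] using hu w
  exact (Module.forall_dual_apply_eq_zero_iff k u).mp this

-- (F2): ∑ λ(x c₁) λ(S(c₂) y) = λ(c) λ(x y)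
lemma s7_F2 (c : H) (lam : H →ₗ[k] k)
    (hc : ∀ h : H, h * c = ε' h • c)
    (hlam : ∀ h : H, (TensorProduct.lid k H) ((LinearMap.rTensor H lam) (Δ h)) = lam h • (1 : H))
    (x y : H) :
    (TensorProduct.lid k k) (map (lam ∘ₗ LinearMap.mulLeft k x)
        (lam ∘ₗ LinearMap.mulRight k y ∘ₗ 𝑆) (Δ c))
      = lam c * lam (x * y) := by
  have step : ∀ t : H ⊗[k] H,
      lam (((TensorProduct.lid k H) (map (lam ∘ₗ LinearMap.mulLeft k x) 𝑆 t)) * y)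
        = (TensorProduct.lid k k) (map (lam ∘ₗ LinearMap.mulLeft k x)
            (lam ∘ₗ LinearMap.mulRight k y ∘ₗ 𝑆) t) := by
    intro t
    induction t using TensorProduct.induction_on with
    | zero => simp
    | add p q h1 h2 => simp only [map_add, LinearEquiv.map_add, add_mul, mul_add, h1, h2]
    | tmul u v =>
      simp [smul_mul_assoc, mul_comm]
  rw [← step (Δ c), s7_I2 c lam hc hlam x, smul_mul_assoc, map_smul, smul_eq_mul]

-- (A3): ∑ λ(S(c₂) x) • c₁ = λ(c) • x
lemma s7_A3 (c : H) (lam : H →ₗ[k] k)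
    (hc : ∀ h : H, h * c = ε' h • c)
    (hlam : ∀ h : H, (TensorProduct.lid k H) ((LinearMap.rTensor H lam) (Δ h)) = lam h • (1 : H))
    (hθ : lam c ≠ 0)
    (x : H) :
    (TensorProduct.rid k H) (lTensor H (lam ∘ₗ LinearMap.mulRight k x ∘ₗ 𝑆) (Δ c))
      = lam c • x := by
  apply sub_eq_zero.mp
  apply s7_rker c lam hc hlam hθ
  intro w
  rw [mul_sub, map_sub]
  have step : ∀ t : H ⊗[k] H,
      lam (w * ((TensorProduct.rid k H) (lTensor H (lam ∘ₗ LinearMap.mulRight k x ∘ₗ 𝑆) t)))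
        = (TensorProduct.lid k k) (map (lam ∘ₗ LinearMap.mulLeft k w)
            (lam ∘ₗ LinearMap.mulRight k x ∘ₗ 𝑆) t) := by
    intro t
    induction t using TensorProduct.induction_on with
    | zero => simp
    | add p q h1 h2 => simp only [map_add, LinearEquiv.map_add, add_mul, mul_add, h1, h2]
    | tmul u v =>
      simp [mul_smul_comm, mul_comm]
  rw [step (Δ c), s7_F2 c lam hc hlam w x, mul_smul_comm, map_smul, smul_eq_mul, sub_self]

end NonDeg

end Stmt7Aux

theorem stmt_7
    (k : Type) [Field k] [IsAlgClosed k]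
    (H : Type) [Ring H] [HopfAlgebra k H] [FiniteDimensional k H]
    -- `c` is a non-zero left integral for `H`
    (c : H) (hc_ne : c ≠ 0)
    (hc_left_integral : ∀ h : H, h * c = (Coalgebra.counit (R := k) h) • c)
    -- `γ` is the modulus of `H`
    (γ : H →ₐ[k] k) (hγ : ∀ h : H, c * h = γ h • c)
    -- `lam` is a right cointegral:  (λ ⊗ id)(Δ h) = λ(h) • 1
    (lam : H →ₗ[k] k)
    (hlam : ∀ h : H,
      (TensorProduct.lid k H)
        ((LinearMap.rTensor H lam) (Coalgebra.comul (R := k) h)) = lam h • (1 : H)) :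
    -- conclusion: γ⁻¹(h₍₂₎) · λ(S(h₍₁₎)·a·h₍₃₎) = ε(h) · λ(a) for all a, h
    ∀ a h : H,
      lam ((LinearMap.mul' k H)
        ((LinearMap.rTensor H ((LinearMap.mulRight k a).comp (HopfAlgebra.antipode (R := k))))
          ((LinearMap.rTensor H
              ((TensorProduct.rid k H).toLinearMap.comp
                (LinearMap.lTensor H ((γ.toLinearMap).comp (HopfAlgebra.antipode (R := k))))))
            ((LinearMap.rTensor H (Coalgebra.comul (R := k))) (Coalgebra.comul (R := k) h)))))
      = (Coalgebra.counit (R := k) h) * lam a := by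
  intro a h
  have hT : (LinearMap.rTensor H
      ((TensorProduct.rid k H).toLinearMap.comp
        (LinearMap.lTensor H ((γ.toLinearMap).comp (HopfAlgebra.antipode (R := k))))))
      ((LinearMap.rTensor H (Coalgebra.comul (R := k))) (Coalgebra.comul (R := k) h))
      = s7t γ h := rfl
  rw [hT, s7_bridge a (s7t γ h)]
  by_cases hθ : lam c = 0
  · have hz := s7_degenerate c hc_ne hc_left_integral γ hγ lam hlam hθ
    rw [hz _, hz a, mul_zero]
  · set T := s7t γ h with hTdef
    set F : H →ₗ[k] k := lam ∘ₗ s7sand T with hF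
    have e1 : lam c * lam (s7sand T a) = lam (s7sand T (lam c • a)) := by
      rw [map_smul, map_smul, smul_eq_mul]
    have e2 : ∀ t : H ⊗[k] H,
        lam (s7sand T ((TensorProduct.rid k H)
            (lTensor H (lam ∘ₗ LinearMap.mulRight k a ∘ₗ HopfAlgebra.antipode (R := k)) t)))
          = lam (HopfAlgebra.antipode (R := k)
              ((TensorProduct.lid k H) (rTensor H F t)) * a) := by
      intro t
      induction t using TensorProduct.induction_on with
      | zero => simp
      | add p q h1 h2 =>
        simp only [map_add, LinearEquiv.map_add, add_mul, h1, h2]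
      | tmul u v =>
        simp only [lTensor_tmul, rTensor_tmul, coe_comp, Function.comp_apply,
          TensorProduct.rid_tmul, TensorProduct.lid_tmul, map_smul, smul_mul_assoc,
          LinearMap.smul_apply, smul_eq_mul, hF, LinearMap.mulRight_apply]
        ring
    have e3 := s7_V c γ lam hc_left_integral hγ hlam h
    have chain : lam c * lam (s7sand T a) = (Coalgebra.counit (R := k) h * lam c) * lam a := by
      rw [e1, ← s7_A3 c lam hc_left_integral hlam hθ a, e2 (Coalgebra.comul (R := k) c)]
      rw [← hTdef] at e3
      rw [e3, map_smul, smul_mul_assoc, map_smul, s7_antipode_one, one_mul, smul_eq_mul]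
    have : lam c * lam (s7sand T a) = lam c * (Coalgebra.counit (R := k) h * lam a) := by
      rw [chain]; ring
    exact mul_left_cancel₀ hθ this
end
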